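/- arXiv:0812.2597 — 7 statements merged into one kernel-verified Lean document; each statement's English description precedes it below -/
import Mathlib

section
/- Let G be a simple graph on n ≥ 2 vertices with at least one edge. Then S(G) ≥ 0, and S(G) = 0 if and only if G has exactly one edge, i.e., G is the disjoint union of K₂ with n−2 isolated vertices. -/
open Finset Matrix

variable {V : Type*}

/-- The degree sum `d_G = Tr(Δ(G)) = 2|E(G)|` of a graph. -/
def degreeSum [Fintype V] (G : SimpleGraph V) [DecidableRel G.Adj] : ℕ :=
  ∑ v : V, G.degree v

/-- The density matrix `ρ_G = L(G)/d_G` of a graph. -/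
noncomputable def densityMatrix [Fintype V] [DecidableEq V]
    (G : SimpleGraph V) [DecidableRel G.Adj] : Matrix V V ℝ :=
  ((degreeSum G : ℝ))⁻¹ • G.lapMatrix ℝ

/-- The von Neumann entropy `-∑ λᵢ log₂ λᵢ` of a (hermitian) matrix, computed
from its eigenvalues; the convention `0 log₂ 0 = 0` holds since `Real.logb 2 0 = 0`. -/
noncomputable def matEntropy [Fintype V] [DecidableEq V] (ρ : Matrix V V ℝ) : ℝ :=
  if h : ρ.IsHermitian then -∑ i : V, h.eigenvalues i * Real.logb 2 (h.eigenvalues i) else 0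

/-- The von Neumann entropy `S(G)` of a graph. -/
noncomputable def graphEntropy [Fintype V] [DecidableEq V]
    (G : SimpleGraph V) [DecidableRel G.Adj] : ℝ :=
  matEntropy (densityMatrix G)

/-! ### Auxiliary lemmas -/

/-- Sum of eigenvalues of a real hermitian matrix equals the trace. -/
lemma herm_sum_eig {V : Type*} [Fintype V] [DecidableEq V] {A : Matrix V V ℝ}
    (hA : A.IsHermitian) : ∑ i, hA.eigenvalues i = A.trace := by
  conv_rhs => rw [hA.spectral_theorem, Unitary.conjStarAlgAut_apply]
  rw [Matrix.trace_mul_cycle]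
  rw [Unitary.coe_star_mul_self, Matrix.one_mul, Matrix.trace_diagonal]
  simp

/-- Sum of squares of eigenvalues of a real hermitian matrix equals the trace of its square. -/
lemma herm_sum_eig_sq {V : Type*} [Fintype V] [DecidableEq V] {A : Matrix V V ℝ}
    (hA : A.IsHermitian) : ∑ i, hA.eigenvalues i ^ 2 = (A * A).trace := by
  conv_rhs => rw [hA.spectral_theorem, Unitary.conjStarAlgAut_apply]
  rw [show ((hA.eigenvectorUnitary : Matrix V V ℝ) * diagonal (RCLike.ofReal ∘ hA.eigenvalues)
      * (star (hA.eigenvectorUnitary : Matrix V V ℝ))) *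
      ((hA.eigenvectorUnitary : Matrix V V ℝ) * diagonal (RCLike.ofReal ∘ hA.eigenvalues)
      * (star (hA.eigenvectorUnitary : Matrix V V ℝ)))
      = (hA.eigenvectorUnitary : Matrix V V ℝ) * (diagonal (RCLike.ofReal ∘ hA.eigenvalues) *
        diagonal (RCLike.ofReal ∘ hA.eigenvalues)) * (star (hA.eigenvectorUnitary : Matrix V V ℝ)) by
    rw [Matrix.mul_assoc, Matrix.mul_assoc, Matrix.mul_assoc, Matrix.mul_assoc]
    congr 1
    rw [← Matrix.mul_assoc (star _), Unitary.coe_star_mul_self, Matrix.one_mul, Matrix.mul_assoc]]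
  rw [Matrix.trace_mul_cycle, Unitary.coe_star_mul_self, Matrix.one_mul,
    Matrix.diagonal_mul_diagonal, Matrix.trace_diagonal]
  simp [sq]

lemma trace_lap {V : Type*} [Fintype V] [DecidableEq V] (G : SimpleGraph V)
    [DecidableRel G.Adj] : (G.lapMatrix ℝ).trace = (∑ v : V, (G.degree v : ℝ)) := by
  simp [SimpleGraph.lapMatrix, SimpleGraph.degMatrix, Matrix.trace_sub, Matrix.trace_diagonal]

lemma trace_lap_sq {V : Type*} [Fintype V] [DecidableEq V] (G : SimpleGraph V)
    [DecidableRel G.Adj] : (G.lapMatrix ℝ * G.lapMatrix ℝ).trace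
    = (∑ v : V, (G.degree v : ℝ) ^ 2) + ∑ v : V, (G.degree v : ℝ) := by
  have hDA : ((G.degMatrix ℝ) * (G.adjMatrix ℝ)).trace = 0 := by
    simp only [Matrix.trace, Matrix.diag, Matrix.mul_apply, SimpleGraph.degMatrix,
      Matrix.diagonal_apply, SimpleGraph.adjMatrix_apply, ite_mul, zero_mul, mul_ite, mul_zero]
    refine Finset.sum_eq_zero fun v _ => Finset.sum_eq_zero fun w _ => ?_
    by_cases h : v = w <;> simp [h, G.irrefl]
  have hAD : ((G.adjMatrix ℝ) * (G.degMatrix ℝ)).trace = 0 := by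
    simp [Matrix.trace, Matrix.diag, Matrix.mul_apply, SimpleGraph.degMatrix,
      Matrix.diagonal_apply]
  have hAA : ((G.adjMatrix ℝ) * (G.adjMatrix ℝ)).trace = ∑ v : V, (G.degree v : ℝ) := by
    simp only [Matrix.trace, Matrix.diag, SimpleGraph.adjMatrix_mul_self_apply_self]
  have hDD : ((G.degMatrix ℝ) * (G.degMatrix ℝ)).trace = ∑ v : V, (G.degree v : ℝ) ^ 2 := by
    simp [SimpleGraph.degMatrix, Matrix.diagonal_mul_diagonal, Matrix.trace_diagonal, sq]
  rw [SimpleGraph.lapMatrix, Matrix.sub_mul, Matrix.mul_sub, Matrix.mul_sub,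
    Matrix.trace_sub, Matrix.trace_sub, Matrix.trace_sub, hDA, hAD, hAA, hDD]
  ring

/-- Entropy of a probability vector: nonnegative, and zero iff the squares also sum to one. -/
lemma prob_entropy {V : Type*} [Fintype V] {p : V → ℝ} (h0 : ∀ i, 0 ≤ p i)
    (h1 : ∑ i, p i = 1) :
    0 ≤ -∑ i, p i * Real.logb 2 (p i) ∧
    (-∑ i, p i * Real.logb 2 (p i) = 0 ↔ ∑ i, p i ^ 2 = 1) := by
  have hle : ∀ i, p i ≤ 1 := fun i =>
    h1 ▸ Finset.single_le_sum (fun j _ => h0 j) (mem_univ i)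
  have hterm : ∀ i, p i * Real.logb 2 (p i) ≤ 0 := fun i =>
    mul_nonpos_of_nonneg_of_nonpos (h0 i)
      (Real.logb_nonpos (by norm_num) (h0 i) (hle i))
  have hnneg : ∀ i ∈ Finset.univ (α := V), 0 ≤ -(p i * Real.logb 2 (p i)) := fun i _ =>
    neg_nonneg.2 (hterm i)
  have hsum : -∑ i, p i * Real.logb 2 (p i) = ∑ i, -(p i * Real.logb 2 (p i)) := by
    rw [Finset.sum_neg_distrib]
  constructor
  · rw [hsum]; exact Finset.sum_nonneg hnneg
  rw [hsum]
  rw [Finset.sum_eq_zero_iff_of_nonneg hnneg]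
  constructor
  · intro h
    have hsq : ∀ i, p i ^ 2 = p i := by
      intro i
      have := neg_eq_zero.mp (h i (mem_univ i))
      rcases eq_or_lt_of_le (h0 i) with h' | h'
      · rw [← h']; ring
      · have : Real.logb 2 (p i) = 0 :=
          (mul_eq_zero.mp this).resolve_left (ne_of_gt h')
        have := Real.eq_one_of_pos_of_logb_eq_zero (by norm_num) h' this
        rw [this]; ring
    simp_rw [hsq]; exact h1
  · intro h i _
    have key : ∀ i, p i ^ 2 = p i := by
      have hz : ∑ i, (p i - p i ^ 2) = 0 := by rw [Finset.sum_sub_distrib, h1, h]; ring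
      have := (Finset.sum_eq_zero_iff_of_nonneg (fun i _ => ?_)).1 hz
      · intro i; have := this i (mem_univ i); linarith
      · have : p i * (1 - p i) ≥ 0 := mul_nonneg (h0 i) (by linarith [hle i])
        nlinarith
    rcases eq_or_lt_of_le (h0 i) with h' | h'
    · rw [← h', mul_comm]; simp
    · have : p i = 1 := by nlinarith [key i]
      rw [this]; simp

/-- Every degree is at most the number of edges. -/
lemma degree_le_card_edges {V : Type*} [Fintype V] [DecidableEq V] (G : SimpleGraph V)
    [DecidableRel G.Adj] (v : V) : G.degree v ≤ G.edgeFinset.card := by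
  rw [← G.card_incidenceFinset_eq_degree v]
  exact Finset.card_le_card (by
    simp only [SimpleGraph.incidenceFinset, SimpleGraph.edgeFinset,
      Set.toFinset_subset_toFinset]
    exact G.incidenceSet_subset v)

/-- For a graph `G` on `n ≥ 2` vertices with at least one edge,
`S(G) ≥ 0`, with equality iff `G` has exactly one edge (i.e. `G` is the disjoint
union of `K₂` with `n - 2` isolated vertices). -/
theorem entropy_nonneg_eq_zero_iff [Fintype V] [DecidableEq V]
    (G : SimpleGraph V) [DecidableRel G.Adj]
    (hn : 2 ≤ Fintype.card V) (hE : G.edgeFinset.Nonempty) :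
    0 ≤ graphEntropy G ∧ (graphEntropy G = 0 ↔ G.edgeFinset.card = 1) := by
  classical
  have hm : 1 ≤ G.edgeFinset.card := hE.card_pos
  have hds : degreeSum G = 2 * G.edgeFinset.card := by
    simpa [degreeSum] using G.sum_degrees_eq_twice_card_edges
  have hdposN : 0 < degreeSum G := by omega
  have hdpos : (0 : ℝ) < (degreeSum G : ℝ) := by exact_mod_cast hdposN
  have hdne : ((degreeSum G : ℝ)) ≠ 0 := ne_of_gt hdpos
  have hpsd : (densityMatrix G).PosSemidef := by
    obtain ⟨hH, hQ⟩ := SimpleGraph.posSemidef_lapMatrix ℝ G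
    refine ⟨?_, fun x => ?_⟩
    · show (densityMatrix G)ᴴ = densityMatrix G
      unfold densityMatrix
      rw [Matrix.conjTranspose_smul, hH]
      norm_num
    · unfold densityMatrix
      have hx : (x.sum fun i xi => x.sum fun j xj =>
            star xi * (((degreeSum G : ℝ))⁻¹ • G.lapMatrix ℝ) i j * xj)
          = ((degreeSum G : ℝ))⁻¹ * (x.sum fun i xi => x.sum fun j xj =>
            star xi * G.lapMatrix ℝ i j * xj) := by
        simp only [Matrix.smul_apply, smul_eq_mul, Finsupp.sum, Finset.mul_sum]
        exact Finset.sum_congr rfl fun i _ => Finset.sum_congr rfl fun j _ => by ring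
      rw [hx]
      exact mul_nonneg (inv_nonneg.mpr hdpos.le) (hQ x)
  have hherm : (densityMatrix G).IsHermitian := hpsd.1
  -- eigenvalues of the density matrix
  set p : V → ℝ := hherm.eigenvalues with hp
  have h0 : ∀ i, 0 ≤ p i := fun i => hpsd.eigenvalues_nonneg i
  -- trace of density matrix is 1
  have htr : (densityMatrix G).trace = 1 := by
    unfold densityMatrix
    rw [Matrix.trace_smul, trace_lap, smul_eq_mul]
    rw [show (∑ v : V, (G.degree v : ℝ)) = (degreeSum G : ℝ) by
      simp [degreeSum]]
    field_simp
  have h1 : ∑ i, p i = 1 := by rw [hp, herm_sum_eig hherm, htr]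
  -- trace of the square
  have htrsq : (densityMatrix G * densityMatrix G).trace
      = ((degreeSum G : ℝ))⁻¹ * ((degreeSum G : ℝ))⁻¹ *
        ((∑ v : V, (G.degree v : ℝ) ^ 2) + (degreeSum G : ℝ)) := by
    unfold densityMatrix
    rw [Matrix.smul_mul, Matrix.mul_smul, smul_smul, Matrix.trace_smul, trace_lap_sq,
      smul_eq_mul]
    rw [show (∑ v : V, (G.degree v : ℝ)) = (degreeSum G : ℝ) by simp [degreeSum]]
  have hsq : ∑ i, p i ^ 2 = ((degreeSum G : ℝ))⁻¹ * ((degreeSum G : ℝ))⁻¹ *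
        ((∑ v : V, (G.degree v : ℝ) ^ 2) + (degreeSum G : ℝ)) := by
    rw [hp, herm_sum_eig_sq hherm, htrsq]
  -- unfold the entropy
  have hent : graphEntropy G = -∑ i, p i * Real.logb 2 (p i) := by
    rw [graphEntropy, matEntropy, dif_pos hherm]
  obtain ⟨hpos, hiff⟩ := prob_entropy h0 h1
  refine ⟨hent ▸ hpos, ?_⟩
  rw [hent, hiff, hsq]
  -- reduce to a statement about natural numbers
  have key : ((degreeSum G : ℝ))⁻¹ * ((degreeSum G : ℝ))⁻¹ *
        ((∑ v : V, (G.degree v : ℝ) ^ 2) + (degreeSum G : ℝ)) = 1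
      ↔ (∑ v : V, (G.degree v : ℝ) ^ 2) + (degreeSum G : ℝ)
          = (degreeSum G : ℝ) * (degreeSum G : ℝ) := by
    rw [inv_mul_eq_div, div_mul_eq_mul_div, div_eq_iff hdne, inv_mul_eq_div,
      div_eq_iff hdne]
    constructor <;> intro h <;> nlinarith
  rw [key]
  have hcast : (∑ v : V, (G.degree v : ℝ) ^ 2) + (degreeSum G : ℝ)
        = (((∑ v : V, G.degree v ^ 2) + degreeSum G : ℕ) : ℝ) := by push_cast; ring
  have hcast2 : (degreeSum G : ℝ) * (degreeSum G : ℝ)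
        = ((degreeSum G * degreeSum G : ℕ) : ℝ) := by push_cast; ring
  rw [hcast, hcast2, Nat.cast_inj]
  -- the combinatorial statement
  set m := G.edgeFinset.card with hmdef
  have hdeg : ∀ v, G.degree v ≤ m := fun v => degree_le_card_edges G v
  constructor
  · intro h
    have hbound : (∑ v : V, G.degree v ^ 2) ≤ (∑ v : V, G.degree v) * m := by
      rw [Finset.sum_mul]
      exact Finset.sum_le_sum fun v _ => by
        have := hdeg v; nlinarith
    have hsum' : (∑ v : V, G.degree v) = degreeSum G := rfl
    rw [hsum', hds] at hbound
    rw [hds] at h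
    nlinarith
  · intro h
    have hdeg1 : ∀ v, G.degree v ≤ 1 := fun v => h ▸ hdeg v
    have hsq1 : ∀ v, G.degree v ^ 2 = G.degree v := fun v => by
      have := hdeg1 v; interval_cases (G.degree v) <;> rfl
    have : (∑ v : V, G.degree v ^ 2) = degreeSum G := by
      simp_rw [hsq1]; rfl
    rw [this, hds, h]
end

section
/- Let G be a simple graph on n ≥ 3 vertices with at least one edge. Then S(G) ≤ log₂(n−1), and S(G) = log₂(n−1) if and only if G is the complete graph K_n. -/
open Finset Matrix

variable {V : Type*}

section Gibbs

private lemma gibbs_term {p q : ℝ} (hp : 0 ≤ p) (hq : 0 < q) :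
    p - q ≤ p * Real.log (p / q) ∧ (p * Real.log (p / q) = p - q ↔ p = q) := by
  rcases hp.eq_or_lt with h0 | h0
  · refine ⟨by rw [← h0]; simpa using hq.le, ?_, ?_⟩
    · intro h; rw [← h0] at h; simp at h; exfalso; linarith
    · intro h; exfalso; rw [← h0] at h; linarith
  · rcases eq_or_ne p q with rfl | hne
    · simp [div_self (ne_of_gt h0)]
    · have hx : 0 < q / p := div_pos hq h0
      have hx1 : q / p ≠ 1 := by
        intro h; apply hne; field_simp at h; linarith
      have h1 : Real.log (q / p) < q / p - 1 := Real.log_lt_sub_one_of_pos hx hx1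
      have e1 : p * Real.log (p / q) = -(p * Real.log (q / p)) := by
        have : Real.log (p / q) = -Real.log (q / p) := by
          rw [← Real.log_inv]; congr 1; field_simp
        rw [this]; ring
      have e2 : p * (q / p - 1) = q - p := by field_simp
      have h3 : p * Real.log (q / p) < p * (q / p - 1) :=
        mul_lt_mul_of_pos_left h1 h0
      constructor
      · linarith
      · constructor
        · intro h; exfalso; linarith
        · intro h; exact absurd h hne

private lemma entropy_bound {ι : Type*} (s : Finset ι) (hs : 0 < ((s.card : ℕ) : ℝ))
    (p : ι → ℝ) (hp : ∀ i ∈ s, 0 ≤ p i) (hsum : ∑ i ∈ s, p i = 1) :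
    (-∑ i ∈ s, p i * Real.logb 2 (p i) ≤ Real.logb 2 (s.card : ℝ)) ∧
    ((-∑ i ∈ s, p i * Real.logb 2 (p i) = Real.logb 2 (s.card : ℝ)) ↔
      ∀ i ∈ s, p i = ((s.card : ℝ))⁻¹) := by
  set c : ℝ := (s.card : ℝ) with hc
  have hcpos : 0 < c := hs
  have hq : 0 < c⁻¹ := inv_pos.mpr hcpos
  set g : ι → ℝ := fun i => p i * Real.log (p i / c⁻¹) - (p i - c⁻¹) with hg
  have hg0 : ∀ i ∈ s, 0 ≤ g i := fun i hi => sub_nonneg.mpr (gibbs_term (hp i hi) hq).1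
  have hgeq : ∀ i ∈ s, (g i = 0 ↔ p i = c⁻¹) := by
    intro i hi
    rw [hg]; simp only
    rw [sub_eq_zero]; exact (gibbs_term (hp i hi) hq).2
  have hsumg : ∑ i ∈ s, g i = (∑ i ∈ s, p i * Real.log (p i)) + Real.log c := by
    have hterm : ∀ i ∈ s, g i = (p i * Real.log (p i) + p i * Real.log c) - (p i - c⁻¹) := by
      intro i hi
      have hdiv : p i / c⁻¹ = p i * c := by field_simp
      rw [hg]; simp only
      rcases (hp i hi).eq_or_lt with h0 | h0
      · rw [← h0]; simp
      · rw [hdiv, Real.log_mul (ne_of_gt h0) (ne_of_gt hcpos)]; ring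
    rw [Finset.sum_congr rfl hterm, Finset.sum_sub_distrib, Finset.sum_add_distrib,
      ← Finset.sum_mul, hsum, one_mul, Finset.sum_sub_distrib, hsum, Finset.sum_const,
      nsmul_eq_mul]
    have : (s.card : ℝ) * c⁻¹ = 1 := mul_inv_cancel₀ (ne_of_gt hcpos)
    rw [this]; ring
  have hlog2 : (0:ℝ) < Real.log 2 := Real.log_pos one_lt_two
  have hrw : ∑ i ∈ s, p i * Real.logb 2 (p i) = (∑ i ∈ s, p i * Real.log (p i)) / Real.log 2 := by
    rw [Finset.sum_div]
    exact Finset.sum_congr rfl fun i _ => by rw [Real.logb, mul_div_assoc]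
  have hlogb : Real.logb 2 c = Real.log c / Real.log 2 := rfl
  have key : -∑ i ∈ s, p i * Real.logb 2 (p i) = Real.logb 2 c - (∑ i ∈ s, g i) / Real.log 2 := by
    rw [hrw, hlogb, hsumg]; ring
  have hgs : 0 ≤ ∑ i ∈ s, g i := Finset.sum_nonneg hg0
  constructor
  · rw [key]
    have : 0 ≤ (∑ i ∈ s, g i) / Real.log 2 := div_nonneg hgs hlog2.le
    linarith
  · rw [key]
    constructor
    · intro h
      have h0 : (∑ i ∈ s, g i) / Real.log 2 = 0 := by linarith
      have h1 : ∑ i ∈ s, g i = 0 := by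
        field_simp at h0; simpa using h0
      intro i hi
      exact (hgeq i hi).mp ((Finset.sum_eq_zero_iff_of_nonneg hg0).mp h1 i hi)
    · intro h
      have h1 : ∑ i ∈ s, g i = 0 :=
        Finset.sum_eq_zero fun i hi => (hgeq i hi).mpr (h i hi)
      rw [h1]; simp

end Gibbs

section MatrixAux
variable {W : Type*} [Fintype W] [DecidableEq W]

private lemma trace_eq_sum_eigenvalues {A : Matrix W W ℝ} (hA : A.IsHermitian) :
    A.trace = ∑ i, hA.eigenvalues i := by
  have hU : star (hA.eigenvectorUnitary : Matrix W W ℝ) * (hA.eigenvectorUnitary : Matrix W W ℝ)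
      = 1 := Matrix.mem_unitaryGroup_iff'.mp hA.eigenvectorUnitary.2
  conv_lhs => rw [hA.spectral_theorem, Unitary.conjStarAlgAut_apply]
  rw [Matrix.trace_mul_comm, ← Matrix.mul_assoc, hU, Matrix.one_mul, Matrix.trace_diagonal]
  simp

private lemma eig_zero_or {A : Matrix W W ℝ} (hA : A.IsHermitian) {c : ℝ}
    (h : A * A = c • A) (i : W) : hA.eigenvalues i = 0 ∨ hA.eigenvalues i = c := by
  have hv := hA.mulVec_eigenvectorBasis i
  have h2 : (A * A) *ᵥ ⇑(hA.eigenvectorBasis i) = (c • A) *ᵥ ⇑(hA.eigenvectorBasis i) := by rw [h]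
  rw [← Matrix.mulVec_mulVec, hv, Matrix.mulVec_smul, hv, Matrix.smul_mulVec, hv,
    smul_smul, smul_smul] at h2
  have hv0 : (⇑(hA.eigenvectorBasis i) : W → ℝ) ≠ 0 := by
    intro h0
    have := hA.eigenvectorBasis.toBasis.ne_zero i
    apply this
    rw [OrthonormalBasis.coe_toBasis]
    ext x
    exact congrFun h0 x
  have h3 : (hA.eigenvalues i * hA.eigenvalues i - c * hA.eigenvalues i)
      • (⇑(hA.eigenvectorBasis i) : W → ℝ) = 0 := by
    rw [sub_smul, h2, sub_self]
  rcases smul_eq_zero.mp h3 with h4 | h4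
  · have h5 : hA.eigenvalues i * (hA.eigenvalues i - c) = 0 := by ring_nf; ring_nf at h4; linarith
    rcases mul_eq_zero.mp h5 with h6 | h6
    · exact Or.inl h6
    · exact Or.inr (by linarith [sub_eq_zero.mp h6])
  · exact absurd h4 hv0

private lemma sq_of_eig_zero_or {A : Matrix W W ℝ} (hA : A.IsHermitian) {c : ℝ}
    (h : ∀ i, hA.eigenvalues i = 0 ∨ hA.eigenvalues i = c) : A * A = c • A := by
  set U : Matrix W W ℝ := (hA.eigenvectorUnitary : Matrix W W ℝ) with hUdef
  set D : Matrix W W ℝ := diagonal (RCLike.ofReal ∘ hA.eigenvalues) with hDdef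
  have hU : star U * U = 1 := Matrix.mem_unitaryGroup_iff'.mp hA.eigenvectorUnitary.2
  have hAU : A * U = U * D := by
    conv_lhs => rw [hA.spectral_theorem, Unitary.conjStarAlgAut_apply]
    rw [Matrix.mul_assoc, Matrix.mul_assoc, hU, Matrix.mul_one]
  have hDD : D * D = c • D := by
    rw [hDdef, diagonal_mul_diagonal]
    ext i k
    rcases eq_or_ne i k with rfl | hik
    · rcases h i with h' | h' <;>
        simp [Matrix.diagonal_apply_eq, Function.comp, h', mul_comm]
    · simp [Matrix.diagonal_apply_ne _ hik, Matrix.smul_apply]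
  calc A * A = A * (U * D * star U) := by
        congr 1
        conv_lhs => rw [hA.spectral_theorem, Unitary.conjStarAlgAut_apply]
    _ = (A * U) * (D * star U) := by rw [Matrix.mul_assoc, Matrix.mul_assoc]
    _ = U * ((D * D) * star U) := by rw [hAU, Matrix.mul_assoc, ← Matrix.mul_assoc D]
    _ = U * ((c • D) * star U) := by rw [hDD]
    _ = c • (U * D * star U) := by
        rw [Matrix.smul_mul, Matrix.mul_smul, Matrix.mul_assoc]
    _ = c • A := by
      conv_rhs => rw [hA.spectral_theorem, Unitary.conjStarAlgAut_apply]

private lemma posSemidef_smul_real {A : Matrix W W ℝ} (hA : A.PosSemidef) {c : ℝ}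
    (hc : 0 ≤ c) : (c • A).PosSemidef := by
  refine ⟨?_, ?_⟩
  · have h1 : (c • A)ᴴ = star c • Aᴴ := Matrix.conjTranspose_smul c A
    rw [Matrix.IsHermitian, h1, star_trivial, hA.1]
  · intro x
    have := hA.2 x
    have h2 := mul_nonneg hc this
    simp only [Finsupp.mul_sum] at h2
    refine h2.trans_eq ?_
    simp only [Matrix.smul_apply, smul_eq_mul, star_trivial]
    refine Finsupp.sum_congr fun i _ => Finsupp.sum_congr fun j _ => ?_
    ring

private lemma lap_apply' (G : SimpleGraph W) [DecidableRel G.Adj] (i k : W) :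
    G.lapMatrix ℝ i k
      = (if i = k then (G.degree i : ℝ) else 0) - (if G.Adj i k then 1 else 0) := by
  simp [SimpleGraph.lapMatrix, SimpleGraph.degMatrix, Matrix.sub_apply, Matrix.diagonal_apply]

private lemma trace_lap_s2 (G : SimpleGraph W) [DecidableRel G.Adj] :
    (G.lapMatrix ℝ).trace = (degreeSum G : ℝ) := by
  rw [Matrix.trace, degreeSum]
  push_cast
  refine Finset.sum_congr rfl fun i _ => ?_
  rw [Matrix.diag_apply, lap_apply' G i i]
  simp [G.irrefl]

private lemma no_common (G : SimpleGraph W) [DecidableRel G.Adj] {r : ℝ}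
    (h : G.lapMatrix ℝ * G.lapMatrix ℝ = r • G.lapMatrix ℝ)
    {i k : W} (hik : i ≠ k) (hna : ¬ G.Adj i k) {m : W} (him : G.Adj i m) (hmk : G.Adj m k) :
    False := by
  have hLik : G.lapMatrix ℝ i k = 0 := by
    rw [lap_apply', if_neg hik, if_neg hna]; ring
  have hsum : ∑ x : W, G.lapMatrix ℝ i x * G.lapMatrix ℝ x k = 0 := by
    have h2 := congrFun (congrFun h i) k
    rw [Matrix.mul_apply] at h2
    rw [h2, Matrix.smul_apply, hLik, smul_zero]
  have hnn : ∀ x ∈ Finset.univ, (0:ℝ) ≤ G.lapMatrix ℝ i x * G.lapMatrix ℝ x k := by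
    intro x _
    rcases eq_or_ne x i with rfl | hxi
    · rw [hLik, mul_zero]
    · rcases eq_or_ne x k with rfl | hxk
      · rw [hLik, zero_mul]
      · have h1 : G.lapMatrix ℝ i x ≤ 0 := by
          rw [lap_apply', if_neg (fun e => hxi e.symm)]
          split_ifs <;> norm_num
        have h2 : G.lapMatrix ℝ x k ≤ 0 := by
          rw [lap_apply', if_neg hxk]
          split_ifs <;> norm_num
        nlinarith
  have hterm := (Finset.sum_eq_zero_iff_of_nonneg hnn).mp hsum m (Finset.mem_univ m)
  have h1 : i ≠ m := G.ne_of_adj him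
  have h2 : m ≠ k := G.ne_of_adj hmk
  rw [lap_apply', lap_apply', if_neg h1, if_neg h2, if_pos him, if_pos hmk] at hterm
  norm_num at hterm

omit [Fintype W] [DecidableEq W] in
private lemma adj_of_walk {G : SimpleGraph W}
    (htrans : ∀ i m k : W, G.Adj i m → G.Adj m k → i = k ∨ G.Adj i k)
    {i k : W} (w : G.Walk i k) : i = k ∨ G.Adj i k := by
  induction w with
  | nil => exact Or.inl rfl
  | @cons a b c h p ih =>
    rcases ih with rfl | hadj
    · exact Or.inr h
    · exact htrans _ _ _ h hadj

end MatrixAux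

/-- For a graph `G` on `n ≥ 3` vertices with at least one edge,
`S(G) ≤ log₂ (n-1)`, with equality iff `G` is the complete graph `K_n`. -/
theorem entropy_le_max_eq_iff_complete [Fintype V] [DecidableEq V]
    (G : SimpleGraph V) [DecidableRel G.Adj]
    (hn : 3 ≤ Fintype.card V) (hE : G.edgeFinset.Nonempty) :
    graphEntropy G ≤ Real.logb 2 ((Fintype.card V : ℝ) - 1) ∧
    (graphEntropy G = Real.logb 2 ((Fintype.card V : ℝ) - 1) ↔ G = ⊤) := by
  classical
  have hnV : Nonempty V := Fintype.card_pos_iff.mp (by omega)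
  -- degree sum is positive
  have hdpos : 0 < degreeSum G := by
    rw [degreeSum, SimpleGraph.sum_degrees_eq_twice_card_edges]
    have := Finset.card_pos.mpr hE
    omega
  have hd0 : ((degreeSum G : ℕ) : ℝ) ≠ 0 := by positivity
  have hdRpos : (0:ℝ) < ((degreeSum G : ℕ) : ℝ) := by positivity
  -- hermitian & PSD
  have hpsdL : (G.lapMatrix ℝ).PosSemidef := G.posSemidef_lapMatrix (R := ℝ)
  have hpsd : (densityMatrix G).PosSemidef :=
    posSemidef_smul_real hpsdL (by positivity)
  have hherm : (densityMatrix G).IsHermitian := hpsd.1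
  have hp0 : ∀ i, 0 ≤ hherm.eigenvalues i := fun i => hpsd.eigenvalues_nonneg i
  -- sum of eigenvalues = 1
  have hsum1 : ∑ i, hherm.eigenvalues i = 1 := by
    rw [← trace_eq_sum_eigenvalues hherm, densityMatrix, Matrix.trace_smul, trace_lap_s2,
      smul_eq_mul, inv_mul_cancel₀ hd0]
  -- entropy formula
  have hent : graphEntropy G
      = -∑ i, hherm.eigenvalues i * Real.logb 2 (hherm.eigenvalues i) := by
    rw [graphEntropy, matEntropy, dif_pos hherm]
  -- a zero eigenvalue
  obtain ⟨j, -, hj⟩ : ∃ j ∈ Finset.univ, hherm.eigenvalues j = 0 := by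
    have hdet : (densityMatrix G).det = 0 := by
      rw [← Matrix.exists_mulVec_eq_zero_iff]
      refine ⟨fun _ => 1, ?_, ?_⟩
      · intro h0
        have := congrFun h0 (Classical.arbitrary V)
        simp at this
      · rw [densityMatrix, Matrix.smul_mulVec, G.lapMatrix_mulVec_const_eq_zero, smul_zero]
    have := hherm.det_eq_prod_eigenvalues
    rw [hdet] at this
    exact Finset.prod_eq_zero_iff.mp this.symm
  set s : Finset V := Finset.univ.erase j with hsdef
  have hcards : s.card = Fintype.card V - 1 := by
    rw [hsdef, Finset.card_erase_of_mem (Finset.mem_univ j), Finset.card_univ]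
  have hcast : ((s.card : ℕ) : ℝ) = (Fintype.card V : ℝ) - 1 := by
    rw [hcards, Nat.cast_sub (by omega)]; norm_num
  have hsum' : ∑ i ∈ s, hherm.eigenvalues i = 1 := by
    rw [hsdef, Finset.sum_erase _ hj, hsum1]
  have hentS : graphEntropy G
      = -∑ i ∈ s, hherm.eigenvalues i * Real.logb 2 (hherm.eigenvalues i) := by
    rw [hent, hsdef]
    congr 1
    rw [Finset.sum_erase]
    rw [hj]; simp
  have hcge3 : (3:ℝ) ≤ (Fintype.card V : ℝ) := by exact_mod_cast hn
  obtain ⟨hle, hiff⟩ := entropy_bound s (by rw [hcast]; linarith)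
    hherm.eigenvalues (fun i _ => hp0 i) hsum'
  constructor
  · rw [hentS]
    calc -∑ i ∈ s, hherm.eigenvalues i * Real.logb 2 (hherm.eigenvalues i)
        ≤ Real.logb 2 ((s.card : ℕ) : ℝ) := hle
      _ = Real.logb 2 ((Fintype.card V : ℝ) - 1) := by rw [hcast]
  constructor
  · -- equality → complete
    intro heqv
    set c : ℝ := ((Fintype.card V : ℝ) - 1)⁻¹ with hcdef
    have hcpos : 0 < c := by rw [hcdef]; apply inv_pos.mpr; linarith
    have hvals : ∀ i ∈ s, hherm.eigenvalues i = c := by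
      have heq2 : -∑ i ∈ s, hherm.eigenvalues i * Real.logb 2 (hherm.eigenvalues i)
          = Real.logb 2 ((s.card : ℕ) : ℝ) := by
        rw [← hentS, heqv, hcast]
      intro i hi
      have := hiff.mp heq2 i hi
      rw [this, hcdef, hcast]
    have hall : ∀ i, hherm.eigenvalues i = 0 ∨ hherm.eigenvalues i = c := by
      intro i
      rcases eq_or_ne i j with rfl | hij
      · exact Or.inl hj
      · exact Or.inr (hvals i (Finset.mem_erase.mpr ⟨hij, Finset.mem_univ i⟩))
    have hsq : densityMatrix G * densityMatrix G = c • densityMatrix G :=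
      sq_of_eig_zero_or hherm hall
    have hLρ : G.lapMatrix ℝ = ((degreeSum G : ℕ) : ℝ) • densityMatrix G := by
      rw [densityMatrix, smul_smul, mul_inv_cancel₀ hd0, one_smul]
    have hLsq : G.lapMatrix ℝ * G.lapMatrix ℝ
        = (c * ((degreeSum G : ℕ) : ℝ)) • G.lapMatrix ℝ := by
      calc G.lapMatrix ℝ * G.lapMatrix ℝ
          = (((degreeSum G : ℕ) : ℝ) • densityMatrix G) * (((degreeSum G : ℕ) : ℝ) •
              densityMatrix G) := by rw [← hLρ]
        _ = (((degreeSum G : ℕ) : ℝ) * ((degreeSum G : ℕ) : ℝ))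
              • (densityMatrix G * densityMatrix G) := by
            rw [Matrix.smul_mul, Matrix.mul_smul, smul_smul]
        _ = (((degreeSum G : ℕ) : ℝ) * ((degreeSum G : ℕ) : ℝ) * c) • densityMatrix G := by
            rw [hsq, smul_smul]
        _ = (c * ((degreeSum G : ℕ) : ℝ)) • (((degreeSum G : ℕ) : ℝ) • densityMatrix G) := by
            rw [smul_smul]; ring_nf
        _ = (c * ((degreeSum G : ℕ) : ℝ)) • G.lapMatrix ℝ := by rw [← hLρ]
    -- rank and connectivity
    have hrank : (densityMatrix G).rank = Fintype.card V - 1 := by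
      rw [hherm.rank_eq_card_non_zero_eigs]
      rw [Fintype.card_subtype]
      have hfil : Finset.univ.filter (fun i => hherm.eigenvalues i ≠ 0) = s := by
        ext x
        simp only [Finset.mem_filter, Finset.mem_univ, true_and, hsdef, Finset.mem_erase,
          and_true]
        constructor
        · intro hx hxj; subst hxj; exact hx hj
        · intro hx
          rw [hvals x (Finset.mem_erase.mpr ⟨hx, Finset.mem_univ x⟩)]
          exact ne_of_gt hcpos
      rw [hfil, hcards]
    have hker1 : Module.finrank ℝ (LinearMap.ker (Matrix.toLin' (G.lapMatrix ℝ))) = 1 := by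
      have htl : ∀ (M : Matrix V V ℝ), Matrix.toLin' M = M.mulVecLin := fun M =>
        LinearMap.ext fun v => by rw [Matrix.toLin'_apply, Matrix.mulVecLin_apply]
      have hsm : (densityMatrix G).mulVecLin
          = (((degreeSum G : ℕ) : ℝ))⁻¹ • (G.lapMatrix ℝ).mulVecLin := by
        refine LinearMap.ext fun v => ?_
        rw [Matrix.mulVecLin_apply, densityMatrix, Matrix.smul_mulVec]
        simp [Matrix.mulVecLin_apply]
      have hkereq : LinearMap.ker (Matrix.toLin' (G.lapMatrix ℝ))
          = LinearMap.ker ((densityMatrix G).mulVecLin) := by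
        rw [htl, hsm, LinearMap.ker_smul _ _ (inv_ne_zero hd0)]
      rw [hkereq]
      have hrn := LinearMap.finrank_range_add_finrank_ker ((densityMatrix G).mulVecLin)
      have hfr : Module.finrank ℝ (LinearMap.range ((densityMatrix G).mulVecLin))
          = Fintype.card V - 1 := hrank
      have hpi : Module.finrank ℝ (V → ℝ) = Fintype.card V := by
        simp [Module.finrank_pi]
      rw [hfr, hpi] at hrn
      omega
    have hcc : Fintype.card G.ConnectedComponent = 1 := by
      rw [G.card_connectedComponent_eq_finrank_ker_toLin'_lapMatrix, hker1]
    have hreach : ∀ a b : V, G.Reachable a b := by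
      have hsub : Subsingleton G.ConnectedComponent :=
        Fintype.card_le_one_iff_subsingleton.mp (le_of_eq hcc)
      intro a b
      exact SimpleGraph.ConnectedComponent.exact (Subsingleton.elim _ _)
    have htrans : ∀ i m k : V, G.Adj i m → G.Adj m k → i = k ∨ G.Adj i k := by
      intro i m k him hmk
      by_cases hik : i = k
      · exact Or.inl hik
      by_cases ha : G.Adj i k
      · exact Or.inr ha
      exact absurd (no_common G hLsq hik ha him hmk) not_false
    ext i k
    simp only [SimpleGraph.top_adj]
    constructor
    · exact fun h => G.ne_of_adj h
    · intro hik
      obtain ⟨w⟩ := hreach i k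
      rcases adj_of_walk htrans w with rfl | h
      · exact absurd rfl hik
      · exact h
  · -- complete → equality
    intro hG
    subst hG
    have hn1 : ((Fintype.card V : ℝ) - 1) ≠ 0 := by linarith
    have hnne : (Fintype.card V : ℝ) ≠ 0 := by linarith
    set c : ℝ := ((Fintype.card V : ℝ) - 1)⁻¹ with hcdef
    have hdeg : ∀ v : V, (((⊤ : SimpleGraph V).degree v : ℕ) : ℝ)
        = (Fintype.card V : ℝ) - 1 := by
      intro v
      rw [SimpleGraph.degree_eq_sum_if_adj]
      have hterm : ∀ m : V, (if (⊤ : SimpleGraph V).Adj v m then (1:ℝ) else 0)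
          = 1 - (if v = m then 1 else 0) := by
        intro m
        by_cases h : v = m <;> simp [h, SimpleGraph.top_adj]
      rw [Finset.sum_congr rfl fun m _ => hterm m, Finset.sum_sub_distrib, Finset.sum_const,
        Finset.sum_ite_eq Finset.univ v (fun _ => (1:ℝ)), if_pos (Finset.mem_univ v)]
      simp [Finset.card_univ]
    have hL : ∀ i m : V, (⊤ : SimpleGraph V).lapMatrix ℝ i m
        = (Fintype.card V : ℝ) * (if i = m then 1 else 0) - 1 := by
      intro i m
      rw [lap_apply']
      rcases eq_or_ne i m with rfl | him
      · rw [if_pos rfl, if_pos rfl, if_neg ((⊤ : SimpleGraph V).irrefl), hdeg i]; ring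
      · rw [if_neg him, if_neg him, if_pos (by simpa [SimpleGraph.top_adj] using him)]; ring
    have hLL : (⊤ : SimpleGraph V).lapMatrix ℝ * (⊤ : SimpleGraph V).lapMatrix ℝ
        = (Fintype.card V : ℝ) • (⊤ : SimpleGraph V).lapMatrix ℝ := by
      ext i k
      rw [Matrix.mul_apply, Matrix.smul_apply, hL i k]
      have hexp : ∀ m : V, (⊤ : SimpleGraph V).lapMatrix ℝ i m
            * (⊤ : SimpleGraph V).lapMatrix ℝ m k
          = (Fintype.card V : ℝ)^2 * ((if i = m then (1:ℝ) else 0) * (if m = k then 1 else 0))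
            - (Fintype.card V : ℝ) * (if i = m then 1 else 0)
            - (Fintype.card V : ℝ) * (if m = k then 1 else 0) + 1 := by
        intro m
        rw [hL i m, hL m k]; ring
      rw [Finset.sum_congr rfl fun m _ => hexp m]
      have e1 : ∑ m : V, (if i = m then (1:ℝ) else 0) = 1 := by simp
      have e2 : ∑ m : V, (if m = k then (1:ℝ) else 0) = 1 := by simp
      have e3 : ∑ m : V, (if i = m then (1:ℝ) else 0) * (if m = k then 1 else 0)
          = if i = k then 1 else 0 := by
        rw [Finset.sum_eq_single i (fun b _ hb => by rw [if_neg fun e => hb e.symm, zero_mul])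
          (fun h => absurd (Finset.mem_univ i) h), if_pos rfl, one_mul]
      rw [Finset.sum_add_distrib, Finset.sum_sub_distrib, Finset.sum_sub_distrib,
        ← Finset.mul_sum, ← Finset.mul_sum, ← Finset.mul_sum, e1, e2, e3, Finset.sum_const,
        Finset.card_univ, nsmul_eq_mul, smul_eq_mul]
      by_cases h : i = k <;> simp [h] <;> ring
    have hdval : ((degreeSum (⊤ : SimpleGraph V) : ℕ) : ℝ)
        = (Fintype.card V : ℝ) * ((Fintype.card V : ℝ) - 1) := by
      rw [← trace_lap_s2, Matrix.trace]
      have hdiag : ∀ i : V, ((⊤ : SimpleGraph V).lapMatrix ℝ).diag i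
          = (Fintype.card V : ℝ) - 1 := by
        intro i; rw [Matrix.diag_apply, hL i i, if_pos rfl]; ring
      rw [Finset.sum_congr rfl fun i _ => hdiag i, Finset.sum_const, Finset.card_univ,
        nsmul_eq_mul]
    have hsq1 : densityMatrix (⊤ : SimpleGraph V) * densityMatrix (⊤ : SimpleGraph V)
        = (((degreeSum (⊤ : SimpleGraph V) : ℕ) : ℝ)⁻¹
            * ((degreeSum (⊤ : SimpleGraph V) : ℕ) : ℝ)⁻¹ * (Fintype.card V : ℝ))
          • (⊤ : SimpleGraph V).lapMatrix ℝ := by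
      rw [densityMatrix, Matrix.smul_mul, Matrix.mul_smul, hLL, smul_smul, smul_smul]
    have hsq2 : c • densityMatrix (⊤ : SimpleGraph V)
        = (c * ((degreeSum (⊤ : SimpleGraph V) : ℕ) : ℝ)⁻¹) • (⊤ : SimpleGraph V).lapMatrix ℝ := by
      rw [densityMatrix, smul_smul]
    have hsqρ : densityMatrix (⊤ : SimpleGraph V) * densityMatrix (⊤ : SimpleGraph V)
        = c • densityMatrix (⊤ : SimpleGraph V) := by
      rw [hsq1, hsq2]
      congr 1
      rw [hdval, hcdef]
      field_simp
    have heigs := fun i => eig_zero_or hherm hsqρ i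
    have hterm2 : ∀ i : V, hherm.eigenvalues i * Real.logb 2 (hherm.eigenvalues i)
        = hherm.eigenvalues i * Real.logb 2 c := by
      intro i
      rcases heigs i with h' | h'
      · rw [h']; simp
      · rw [h']
    rw [hent, Finset.sum_congr rfl fun i _ => hterm2 i, ← Finset.sum_mul, hsum1, one_mul,
      hcdef, Real.logb_inv]
    ring
end

section
/- Let G be a simple graph with at least one edge and let G′ = G + {x,y} be the graph obtained from G by adding one new edge {x,y} (so d_{G′} = d_G + 2). Then S(ρ_{G′}) ≥ ((d_{G′} − 2)/d_{G′}) · S(ρ_G). -/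
open Finset Matrix

variable {V : Type*}

section AuxEntropy

variable {n : Type*} [Fintype n] [DecidableEq n]

lemma psd_smul {M : Matrix n n ℝ} (hM : M.PosSemidef) {c : ℝ} (hc : 0 ≤ c) :
    (c • M).PosSemidef := by
  refine PosSemidef.of_dotProduct_mulVec_nonneg ?_ (fun z => ?_)
  · unfold Matrix.IsHermitian
    rw [conjTranspose_smul, hM.1]
    simp
  · rw [smul_mulVec, dotProduct_smul]
    exact mul_nonneg hc (hM.dotProduct_mulVec_nonneg z)

lemma psd_diag_nonneg {M : Matrix n n ℝ} (hM : M.PosSemidef) (i : n) : 0 ≤ M i i := by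
  have := hM.dotProduct_mulVec_nonneg (Pi.single i 1)
  simpa [dotProduct, mulVec, Pi.single_apply, Finset.sum_ite_eq] using this

lemma trace_eq_sum_eigenvalues_s3 {M : Matrix n n ℝ} (hM : M.IsHermitian) :
    M.trace = ∑ i, hM.eigenvalues i := by
  nth_rewrite 1 [hM.spectral_theorem]
  rw [Unitary.conjStarAlgAut_apply, Matrix.trace_mul_cycle,
    (Matrix.mem_unitaryGroup_iff').mp (hM.eigenvectorUnitary).2, Matrix.one_mul]
  simp [Matrix.trace_diagonal]

lemma matEntropy_eq {M : Matrix n n ℝ} (hM : M.IsHermitian) :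
    matEntropy M = (Real.log 2)⁻¹ * ∑ i, Real.negMulLog (hM.eigenvalues i) := by
  rw [matEntropy, dif_pos hM, Finset.mul_sum, ← Finset.sum_neg_distrib]
  exact Finset.sum_congr rfl (fun i _ => by rw [Real.negMulLog, Real.logb]; ring)

lemma key {A B : Matrix n n ℝ} (hA : A.PosSemidef) (hB : B.PosSemidef)
    (htA : A.trace = 1) (htB : B.trace = 1) {t : ℝ} (ht0 : 0 ≤ t) (ht1 : t ≤ 1) :
    (1 - t) * matEntropy A ≤ matEntropy ((1 - t) • A + t • B) := by
  have ht0' : (0:ℝ) ≤ 1 - t := by linarith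
  set σ : Matrix n n ℝ := (1 - t) • A + t • B with hσdef
  have hσ : σ.PosSemidef := (psd_smul hA ht0').add (psd_smul hB ht0)
  have htσ : σ.trace = 1 := by
    rw [hσdef, Matrix.trace_add, Matrix.trace_smul, Matrix.trace_smul, htA, htB]
    simp
  set U : Matrix n n ℝ := (hσ.1.eigenvectorUnitary : Matrix n n ℝ) with hU
  set q : n → ℝ := hσ.1.eigenvalues with hqdef
  have hdiag : star U * σ * U = Matrix.diagonal q := by
    have := hσ.1.conjStarAlgAut_star_eigenvectorUnitary
    rw [Unitary.conjStarAlgAut_star_apply] at this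
    simpa [RCLike.ofReal_real_eq_id] using this
  set a : n → ℝ := fun j => (star U * A * U) j j with ha
  set b : n → ℝ := fun j => (star U * B * U) j j with hb
  have hsplit : star U * σ * U = (1 - t) • (star U * A * U) + t • (star U * B * U) := by
    rw [hσdef, Matrix.mul_add, Matrix.add_mul, Matrix.mul_smul, Matrix.smul_mul,
      Matrix.mul_smul, Matrix.smul_mul]
  have hq : ∀ j, q j = (1 - t) * a j + t * b j := by
    intro j
    have h1 : Matrix.diagonal q j j
        = ((1 - t) • (star U * A * U) + t • (star U * B * U)) j j := by
      rw [← hsplit, hdiag]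
    simpa [Matrix.diagonal_apply_eq, Matrix.add_apply, Matrix.smul_apply, smul_eq_mul] using h1
  have haPSD : (star U * A * U).PosSemidef := by
    have := hA.conjTranspose_mul_mul_same U
    rwa [← Matrix.star_eq_conjTranspose] at this
  have hbPSD : (star U * B * U).PosSemidef := by
    have := hB.conjTranspose_mul_mul_same U
    rwa [← Matrix.star_eq_conjTranspose] at this
  have ha0 : ∀ j, 0 ≤ a j := fun j => psd_diag_nonneg haPSD j
  have hb0 : ∀ j, 0 ≤ b j := fun j => psd_diag_nonneg hbPSD j
  have hU2 : U * star U = 1 := (Matrix.mem_unitaryGroup_iff).mp (hσ.1.eigenvectorUnitary).2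
  have hU2' : star U * U = 1 := (Matrix.mem_unitaryGroup_iff').mp (hσ.1.eigenvectorUnitary).2
  have htrconj : ∀ (C : Matrix n n ℝ), (star U * C * U).trace = C.trace := by
    intro C
    rw [Matrix.trace_mul_cycle, hU2, Matrix.one_mul]
  have htra : ∑ j, a j = 1 := by
    have h2 : ∑ j, a j = (star U * A * U).trace := by
      simp [Matrix.trace, Matrix.diag, ha]
    rw [h2, htrconj, htA]
  have htrb : ∑ j, b j = 1 := by
    have h2 : ∑ j, b j = (star U * B * U).trace := by
      simp [Matrix.trace, Matrix.diag, hb]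
    rw [h2, htrconj, htB]
  have ha1 : ∀ j, a j ≤ 1 :=
    fun j => htra ▸ Finset.single_le_sum (fun i _ => ha0 i) (mem_univ j)
  have hb1 : ∀ j, b j ≤ 1 :=
    fun j => htrb ▸ Finset.single_le_sum (fun i _ => hb0 i) (mem_univ j)
  -- step A
  have step1 : ∀ j, (1 - t) * Real.negMulLog (a j) + t * Real.negMulLog (b j)
      ≤ Real.negMulLog (q j) := by
    intro j
    have := Real.concaveOn_negMulLog.2 (Set.mem_Ici.mpr (ha0 j)) (Set.mem_Ici.mpr (hb0 j))
      ht0' ht0 (by ring)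
    simpa [smul_eq_mul, ← hq j] using this
  -- step C: Schur concavity via Jensen
  set W : Matrix n n ℝ := (hA.1.eigenvectorUnitary : Matrix n n ℝ) with hW
  set p : n → ℝ := hA.1.eigenvalues with hpdef
  have hp0 : ∀ i, 0 ≤ p i := hA.eigenvalues_nonneg
  set M : Matrix n n ℝ := star U * W with hM
  have hMstar : star M = star W * U := by rw [hM, Matrix.star_mul, star_star]
  have hW2 : W * star W = 1 := (Matrix.mem_unitaryGroup_iff).mp (hA.1.eigenvectorUnitary).2
  have hW2' : star W * W = 1 := (Matrix.mem_unitaryGroup_iff').mp (hA.1.eigenvectorUnitary).2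
  have hMM : M * star M = 1 := by
    rw [hM, hMstar, Matrix.mul_assoc, ← Matrix.mul_assoc W, hW2, Matrix.one_mul, hU2']
  have hMM' : star M * M = 1 := by
    rw [hM, hMstar, Matrix.mul_assoc, ← Matrix.mul_assoc U, hU2, Matrix.one_mul, hW2']
  have hrow : ∀ j, ∑ i, (M j i)^2 = 1 := by
    intro j
    have h3 : (M * star M) j j = (1 : Matrix n n ℝ) j j := by rw [hMM]
    simpa [Matrix.mul_apply, Matrix.star_apply, Matrix.one_apply, sq] using h3
  have hcol : ∀ i, ∑ j, (M j i)^2 = 1 := by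
    intro i
    have h3 : (star M * M) i i = (1 : Matrix n n ℝ) i i := by rw [hMM']
    simpa [Matrix.mul_apply, Matrix.star_apply, Matrix.one_apply, sq] using h3
  have haeq : ∀ j, a j = ∑ i, (M j i)^2 * p i := by
    intro j
    have hAeq : star U * A * U = M * Matrix.diagonal p * star M := by
      rw [hMstar, hM]
      nth_rewrite 1 [hA.1.spectral_theorem]
      simp only [Unitary.conjStarAlgAut_apply, RCLike.ofReal_real_eq_id, Function.comp_def, id_eq,
        Matrix.mul_assoc]
      rfl
    have h5 : (M * Matrix.diagonal p * star M) j j = ∑ i, (M j i)^2 * p i := by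
      rw [Matrix.mul_apply]
      refine Finset.sum_congr rfl fun i _ => ?_
      rw [Matrix.mul_diagonal, Matrix.star_apply, star_trivial]
      ring
    calc a j = (star U * A * U) j j := rfl
      _ = (M * Matrix.diagonal p * star M) j j := by rw [hAeq]
      _ = _ := h5
  have jensen : ∀ j, ∑ i, (M j i)^2 * Real.negMulLog (p i) ≤ Real.negMulLog (a j) := by
    intro j
    have h4 := Real.concaveOn_negMulLog.le_map_sum (t := Finset.univ)
      (w := fun i => (M j i)^2) (p := p)
      (fun i _ => sq_nonneg _) (hrow j) (fun i _ => Set.mem_Ici.mpr (hp0 i))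
    simpa [smul_eq_mul, ← haeq j] using h4
  have stepC : ∑ i, Real.negMulLog (p i) ≤ ∑ j, Real.negMulLog (a j) := by
    calc ∑ i, Real.negMulLog (p i)
        = ∑ i, (∑ j, (M j i)^2) * Real.negMulLog (p i) := by simp [hcol]
      _ = ∑ j, ∑ i, (M j i)^2 * Real.negMulLog (p i) := by
          simp_rw [Finset.sum_mul]; exact Finset.sum_comm
      _ ≤ ∑ j, Real.negMulLog (a j) := Finset.sum_le_sum (fun j _ => jensen j)
  have stepB : 0 ≤ ∑ j, Real.negMulLog (b j) :=
    Finset.sum_nonneg fun j _ => Real.negMulLog_nonneg (hb0 j) (hb1 j)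
  have main : (1 - t) * ∑ i, Real.negMulLog (p i) ≤ ∑ j, Real.negMulLog (q j) := by
    calc (1 - t) * ∑ i, Real.negMulLog (p i)
        ≤ (1 - t) * ∑ j, Real.negMulLog (a j) := mul_le_mul_of_nonneg_left stepC ht0'
      _ ≤ (1 - t) * ∑ j, Real.negMulLog (a j) + t * ∑ j, Real.negMulLog (b j) :=
          le_add_of_nonneg_right (mul_nonneg ht0 stepB)
      _ = ∑ j, ((1 - t) * Real.negMulLog (a j) + t * Real.negMulLog (b j)) := by
          rw [Finset.sum_add_distrib, Finset.mul_sum, Finset.mul_sum]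
      _ ≤ ∑ j, Real.negMulLog (q j) := Finset.sum_le_sum (fun j _ => step1 j)
  rw [matEntropy_eq hA.1, matEntropy_eq hσ.1]
  have hlog : (0:ℝ) ≤ (Real.log 2)⁻¹ := inv_nonneg.mpr (Real.log_nonneg one_le_two)
  calc (1 - t) * ((Real.log 2)⁻¹ * ∑ i, Real.negMulLog (hA.1.eigenvalues i))
      = (Real.log 2)⁻¹ * ((1 - t) * ∑ i, Real.negMulLog (p i)) := by rw [← hpdef]; ring
    _ ≤ (Real.log 2)⁻¹ * ∑ j, Real.negMulLog (q j) := mul_le_mul_of_nonneg_left main hlog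

end AuxEntropy

/-- If `G` has at least one edge and `G' = G + {x,y}` is obtained
from `G` by adding one new edge (so `d_{G'} = d_G + 2`), then
`S(ρ_{G'}) ≥ ((d_{G'} - 2)/d_{G'}) · S(ρ_G)`. -/
theorem entropy_add_edge [Fintype V] [DecidableEq V]
    (G G' : SimpleGraph V) [DecidableRel G.Adj] [DecidableRel G'.Adj]
    (x y : V) (hxy : x ≠ y) (hnadj : ¬ G.Adj x y)
    (hE : G.edgeFinset.Nonempty)
    (hG' : G' = G ⊔ SimpleGraph.fromEdgeSet {s(x, y)}) :
    ((degreeSum G' : ℝ) - 2) / (degreeSum G' : ℝ) * graphEntropy G ≤ graphEntropy G' := by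
  classical
  set H : SimpleGraph V := SimpleGraph.fromEdgeSet {s(x, y)} with hH
  have hHadj : ∀ a b, H.Adj a b ↔ (a = x ∧ b = y) ∨ (a = y ∧ b = x) := by
    intro a b
    simp only [hH, SimpleGraph.fromEdgeSet_adj, Set.mem_singleton_iff, Sym2.eq_iff]
    constructor
    · rintro ⟨h, _⟩; exact h
    · rintro (⟨rfl, rfl⟩ | ⟨rfl, rfl⟩)
      · exact ⟨Or.inl ⟨rfl, rfl⟩, hxy⟩
      · exact ⟨Or.inr ⟨rfl, rfl⟩, hxy.symm⟩
  have hG'adj : ∀ a b, G'.Adj a b ↔ G.Adj a b ∨ H.Adj a b := by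
    intro a b; rw [hG']; exact SimpleGraph.sup_adj _ _ _ _
  have hnot : ∀ a b, H.Adj a b → ¬ G.Adj a b := by
    intro a b hh hg
    rcases (hHadj a b).1 hh with ⟨rfl, rfl⟩ | ⟨rfl, rfl⟩
    · exact hnadj hg
    · exact hnadj hg.symm
  have hdeg : ∀ v, (G'.degree v : ℝ) = (G.degree v : ℝ) + (H.degree v : ℝ) := by
    intro v
    rw [SimpleGraph.degree_eq_sum_if_adj, SimpleGraph.degree_eq_sum_if_adj,
      SimpleGraph.degree_eq_sum_if_adj, ← Finset.sum_add_distrib]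
    refine Finset.sum_congr rfl fun j _ => ?_
    by_cases hg : G.Adj v j
    · have h1 : ¬ H.Adj v j := fun hh => hnot _ _ hh hg
      simp [hg, h1, (hG'adj v j).2 (Or.inl hg)]
    · by_cases hh : H.Adj v j
      · simp [hg, hh, (hG'adj v j).2 (Or.inr hh)]
      · have h1 : ¬ G'.Adj v j := by rw [hG'adj]; tauto
        simp [hg, hh, h1]
  have hdegH : ∀ v, (H.degree v : ℝ) = (if v = x then 1 else 0) + (if v = y then 1 else 0) := by
    intro v
    rw [SimpleGraph.degree_eq_sum_if_adj]
    have hsummand : ∀ j, (if H.Adj v j then (1:ℝ) else 0)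
        = (if v = x ∧ j = y then 1 else 0) + (if v = y ∧ j = x then 1 else 0) := by
      intro j
      by_cases h1 : v = x ∧ j = y
      · have h2 : ¬ (v = y ∧ j = x) := by
          rintro ⟨h3, h4⟩; exact hxy (h1.1.symm.trans h3)
        simp [hHadj, h1, h2, hxy, hxy.symm]
      · by_cases h2 : v = y ∧ j = x
        · simp [hHadj, h1, h2, hxy, hxy.symm]
        · simp [hHadj, h1, h2]
    rw [Finset.sum_congr rfl fun j _ => hsummand j, Finset.sum_add_distrib]
    congr 1
    · by_cases hv : v = x <;> simp [hv]
    · by_cases hv : v = y <;> simp [hv]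
  have hdH : ∑ v, (H.degree v : ℝ) = 2 := by
    rw [Finset.sum_congr rfl fun v _ => hdegH v, Finset.sum_add_distrib]
    simp
    norm_num
  have hlap : G'.lapMatrix ℝ = G.lapMatrix ℝ + H.lapMatrix ℝ := by
    ext a b
    simp only [SimpleGraph.lapMatrix, SimpleGraph.degMatrix, Matrix.sub_apply, Matrix.add_apply,
      SimpleGraph.adjMatrix_apply]
    by_cases hab : a = b
    · subst hab
      simp only [Matrix.diagonal_apply_eq]
      have h0 : ∀ (K : SimpleGraph V), ¬ K.Adj a a := fun K => K.irrefl
      simp [h0, hdeg a]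
    · simp only [Matrix.diagonal_apply_ne _ hab]
      by_cases hg : G.Adj a b
      · have h1 : ¬ H.Adj a b := fun hh => hnot _ _ hh hg
        simp [hg, h1, (hG'adj a b).2 (Or.inl hg)]
      · by_cases hh : H.Adj a b
        · simp [hg, hh, (hG'adj a b).2 (Or.inr hh)]
        · have h1 : ¬ G'.Adj a b := by rw [hG'adj]; tauto
          simp [hg, hh, h1]
  -- degree sums
  have h2le : 2 ≤ degreeSum G := by
    rw [degreeSum, SimpleGraph.sum_degrees_eq_twice_card_edges]
    have := hE.card_pos
    omega
  set d : ℝ := (degreeSum G : ℝ) with hd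
  have hd2 : (2:ℝ) ≤ d := by rw [hd]; exact_mod_cast h2le
  have hd0 : (0:ℝ) < d := lt_of_lt_of_le two_pos hd2
  have hd0' : d ≠ 0 := ne_of_gt hd0
  have hd20 : d + 2 ≠ 0 := by positivity
  have hcastG : (degreeSum G : ℝ) = ∑ v, (G.degree v : ℝ) := by
    rw [degreeSum]; push_cast; rfl
  have hdsum' : (degreeSum G' : ℝ) = d + 2 := by
    have h3 : (degreeSum G' : ℝ) = ∑ v, (G'.degree v : ℝ) := by
      rw [degreeSum]; push_cast; rfl
    rw [h3, Finset.sum_congr rfl fun v _ => hdeg v, Finset.sum_add_distrib, hdH,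
      ← hcastG, ← hd]
  -- traces of Laplacians
  have hlaptr : ∀ (K : SimpleGraph V) (_ : DecidableRel K.Adj),
      (K.lapMatrix ℝ).trace = ∑ v, (K.degree v : ℝ) := by
    intro K hK
    rw [Matrix.trace]
    refine Finset.sum_congr rfl fun v _ => ?_
    simp [Matrix.diag, SimpleGraph.lapMatrix, SimpleGraph.degMatrix]
  -- density matrices
  set t : ℝ := 2 / (d + 2) with htdef
  set ρB : Matrix V V ℝ := (2:ℝ)⁻¹ • H.lapMatrix ℝ with hρB
  have hPSDG : (densityMatrix G).PosSemidef :=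
    psd_smul (SimpleGraph.posSemidef_lapMatrix ℝ G) (by positivity)
  have hPSDB : ρB.PosSemidef :=
    psd_smul (SimpleGraph.posSemidef_lapMatrix ℝ H) (by norm_num)
  have htrG : (densityMatrix G).trace = 1 := by
    rw [densityMatrix, Matrix.trace_smul, hlaptr G _, ← hcastG, smul_eq_mul, ← hd,
      inv_mul_cancel₀ hd0']
  have htrB : ρB.trace = 1 := by
    rw [hρB, Matrix.trace_smul, hlaptr H _, hdH, smul_eq_mul]
    norm_num
  have ht0 : 0 ≤ t := by positivity
  have ht1 : t ≤ 1 := by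
    rw [htdef, div_le_one (by positivity)]
    linarith
  have hcombo : densityMatrix G' = (1 - t) • densityMatrix G + t • ρB := by
    rw [densityMatrix, densityMatrix, hdsum', hlap, hρB, smul_add, smul_smul, smul_smul, ← hd]
    congr 1
    · congr 1
      rw [htdef]
      field_simp
      ring
    · congr 1
      rw [htdef]
      field_simp
  have hkey := key hPSDG hPSDB htrG htrB ht0 ht1
  rw [← hcombo] at hkey
  have hco : ((degreeSum G' : ℝ) - 2) / (degreeSum G' : ℝ) = 1 - t := by
    rw [hdsum', htdef]
    field_simp
  rw [graphEntropy, graphEntropy, hco]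
  exact hkey
end

section
/- Let (G_n)_{n≥2} be a sequence of simple graphs, with G_n on n vertices and having at least one edge, and for each n let R(G_n) = (1/n) Σ_{i=1}^n (ν_i/d̄) log₂(ν_i/d̄), where ν_1 ≥ … ≥ ν_n are the eigenvalues of L(G_n) and d̄ = d_{G_n}/n. If lim_{n→∞} R(G_n)/log₂ n = 0, then lim_{n→∞} S(G_n)/log₂(n−1) = 1; that is, S(G_n)/S(K_n) → 1. -/
open Finset Matrix

variable {V : Type*}

/-- The quantity `R(G) = (1/n) ∑ᵢ (νᵢ/d̄) log₂ (νᵢ/d̄)`, where `νᵢ` are the eigenvalues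
of the combinatorial Laplacian `L(G)` and `d̄ = d_G/n` is the average degree over all
`n` vertices (with `0 log₂ 0 = 0`). -/
noncomputable def RG [Fintype V] [DecidableEq V]
    (G : SimpleGraph V) [DecidableRel G.Adj] : ℝ :=
  if h : (G.lapMatrix ℝ).IsHermitian then
    (Fintype.card V : ℝ)⁻¹ * ∑ i : V,
      (h.eigenvalues i / ((degreeSum G : ℝ) / (Fintype.card V : ℝ))) *
        Real.logb 2 (h.eigenvalues i / ((degreeSum G : ℝ) / (Fintype.card V : ℝ)))
  else 0


section Aux

open Polynomial

private lemma charmatrix_diag' {n : Type*} [Fintype n] [DecidableEq n] (d : n → ℝ) :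
    charmatrix (Matrix.diagonal d) = Matrix.diagonal (fun i => (X : ℝ[X]) - C (d i)) := by
  ext i j
  by_cases h : i = j
  · subst h; simp [charmatrix_apply]
  · simp [charmatrix_apply_ne _ _ _ h, Matrix.diagonal_apply_ne _ h]

private lemma charpoly_conj_diag {n : Type*} [Fintype n] [DecidableEq n]
    (U : Matrix.unitaryGroup n ℝ) (d : n → ℝ) :
    ((U : Matrix n n ℝ) * Matrix.diagonal d * (star U : Matrix n n ℝ)).charpoly
      = ∏ i, (X - C (d i)) := by
  have hUV : (U : Matrix n n ℝ) * (star U : Matrix n n ℝ) = 1 :=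
    mem_unitaryGroup_iff.mp U.2
  set Uc : Matrix n n ℝ[X] := ((U : Matrix n n ℝ)).map (C : ℝ →+* ℝ[X]) with hUc
  set Vc : Matrix n n ℝ[X] := ((star U : Matrix n n ℝ)).map (C : ℝ →+* ℝ[X]) with hVc
  have hUVc : Uc * Vc = 1 := by
    rw [hUc, hVc, ← Matrix.map_mul, hUV, Matrix.map_one _ (map_zero _) (map_one _)]
  have hdetUV : Uc.det * Vc.det = 1 := by rw [← det_mul, hUVc, det_one]
  have hscalar : Uc * Matrix.scalar n (X : ℝ[X]) * Vc = Matrix.scalar n (X : ℝ[X]) := by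
    rw [(scalar_commute (X : ℝ[X]) (fun r => Commute.all _ _) Uc).symm.eq, mul_assoc,
      hUVc, mul_one]
  have key : charmatrix ((U : Matrix n n ℝ) * Matrix.diagonal d * (star U : Matrix n n ℝ))
      = Uc * charmatrix (Matrix.diagonal d) * Vc := by
    rw [charmatrix, charmatrix, Matrix.mul_sub, Matrix.sub_mul, hscalar]
    congr 1
    simp only [RingHom.mapMatrix_apply, hUc, hVc, ← Matrix.map_mul]
  rw [Matrix.charpoly, key, det_mul, det_mul, mul_comm Uc.det, mul_assoc, hdetUV, mul_one,
    charmatrix_diag', det_diagonal]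

private lemma charpoly_of_isHermitian {n : Type*} [Fintype n] [DecidableEq n] {A : Matrix n n ℝ}
    (hA : A.IsHermitian) : A.charpoly = ∏ i, (X - C (hA.eigenvalues i)) := by
  conv_lhs => rw [hA.spectral_theorem]
  rw [show (RCLike.ofReal ∘ hA.eigenvalues : n → ℝ) = hA.eigenvalues by
    simp [RCLike.ofReal_real_eq_id]]
  exact charpoly_conj_diag hA.eigenvectorUnitary hA.eigenvalues

private lemma roots_prod_eq {n : Type*} [Fintype n] [DecidableEq n] (f : n → ℝ) :
    (∏ i, ((X : ℝ[X]) - C (f i))).roots = Finset.univ.val.map f := by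
  rw [show (∏ i, ((X : ℝ[X]) - C (f i))) = ((Finset.univ.val.map f).map fun a => X - C a).prod by
    rw [Multiset.map_map]; rfl]
  exact roots_multiset_prod_X_sub_C _

private lemma eigenvalues_smul_multiset {n : Type*} [Fintype n] [DecidableEq n] {A : Matrix n n ℝ}
    (hA : A.IsHermitian) (c : ℝ) (hB : (c • A).IsHermitian) :
    Finset.univ.val.map hB.eigenvalues
      = Finset.univ.val.map (fun i => c * hA.eigenvalues i) := by
  have h1 : (c • A).charpoly = ∏ i, (X - C (hB.eigenvalues i)) := charpoly_of_isHermitian hB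
  have h2 : (c • A) = (hA.eigenvectorUnitary : Matrix n n ℝ)
      * Matrix.diagonal (fun i => c * hA.eigenvalues i)
      * (star hA.eigenvectorUnitary : Matrix n n ℝ) := by
    conv_lhs => rw [hA.spectral_theorem]
    rw [show (RCLike.ofReal ∘ hA.eigenvalues : n → ℝ) = hA.eigenvalues by
      simp [RCLike.ofReal_real_eq_id]]
    rw [show (fun i => c * hA.eigenvalues i) = c • hA.eigenvalues from rfl,
      Matrix.diagonal_smul, mul_smul_comm, smul_mul_assoc]
    rw [Unitary.conjStarAlgAut_apply]
  have h3 : (c • A).charpoly = ∏ i, (X - C (c * hA.eigenvalues i)) := by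
    rw [h2]; exact charpoly_conj_diag _ _
  have := congrArg Polynomial.roots (h1.symm.trans h3)
  rwa [roots_prod_eq, roots_prod_eq] at this

private lemma sum_eigenvalues_smul {n : Type*} [Fintype n] [DecidableEq n] {A : Matrix n n ℝ}
    (hA : A.IsHermitian) (c : ℝ) (hB : (c • A).IsHermitian) (g : ℝ → ℝ) :
    ∑ i, g (hB.eigenvalues i) = ∑ i, g (c * hA.eigenvalues i) := by
  have h := congrArg (fun s => (Multiset.map g s).sum) (eigenvalues_smul_multiset hA c hB)
  simp only [Multiset.map_map] at h
  exact h

private lemma sum_eigenvalues_eq_trace' {n : Type*} [Fintype n] [DecidableEq n] {A : Matrix n n ℝ}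
    (hA : A.IsHermitian) : ∑ i, hA.eigenvalues i = A.trace := by
  conv_rhs => rw [hA.spectral_theorem]
  rw [Unitary.conjStarAlgAut_apply]
  rw [Matrix.trace_mul_comm, ← mul_assoc, Unitary.coe_star_mul_self, one_mul]
  simp [Matrix.trace_diagonal, RCLike.ofReal_real_eq_id]

private lemma trace_lapMatrix' {V : Type*} [Fintype V] [DecidableEq V]
    (G : SimpleGraph V) [DecidableRel G.Adj] :
    (G.lapMatrix ℝ).trace = (degreeSum G : ℝ) := by
  simp [SimpleGraph.lapMatrix, Matrix.trace_sub, SimpleGraph.degMatrix, Matrix.trace_diagonal,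
    degreeSum]

private lemma entropy_eq_logb_sub_RG {V : Type*} [Fintype V] [DecidableEq V]
    (G : SimpleGraph V) [DecidableRel G.Adj] (hn : 0 < Fintype.card V)
    (hd : degreeSum G ≠ 0) :
    graphEntropy G = Real.logb 2 (Fintype.card V) - RG G := by
  classical
  have hL : (G.lapMatrix ℝ).IsHermitian := (SimpleGraph.posSemidef_lapMatrix ℝ G).1
  set d : ℝ := (degreeSum G : ℝ) with hd'
  have hd0 : d ≠ 0 := Nat.cast_ne_zero.mpr hd
  set N : ℝ := (Fintype.card V : ℝ) with hN'
  have hN0 : N ≠ 0 := Nat.cast_ne_zero.mpr hn.ne'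
  have hρ : (densityMatrix G).IsHermitian := by
    show (d⁻¹ • G.lapMatrix ℝ).IsHermitian
    unfold Matrix.IsHermitian
    rw [Matrix.conjTranspose_smul, star_trivial, hL.eq]
  set μ : V → ℝ := fun i => d⁻¹ * hL.eigenvalues i with hμ
  have hsumμ : ∑ i, μ i = 1 := by
    rw [hμ]
    rw [← Finset.mul_sum, sum_eigenvalues_eq_trace' hL, trace_lapMatrix' G, ← hd',
      inv_mul_cancel₀ hd0]
  have hS : graphEntropy G = -∑ i, μ i * Real.logb 2 (μ i) := by
    rw [graphEntropy, matEntropy, dif_pos hρ]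
    congr 1
    exact sum_eigenvalues_smul hL d⁻¹ hρ (fun x => x * Real.logb 2 x)
  have hR : RG G = Real.logb 2 N + ∑ i, μ i * Real.logb 2 (μ i) := by
    rw [RG, dif_pos hL]
    have harg : ∀ i, hL.eigenvalues i / (d / N) = N * μ i := by
      intro i
      rw [div_div_eq_mul_div, hμ]
      ring
    have hpt : ∀ i, (hL.eigenvalues i / (d / N)) * Real.logb 2 (hL.eigenvalues i / (d / N))
        = (N * Real.logb 2 N) * μ i + N * (μ i * Real.logb 2 (μ i)) := by
      intro i
      rw [harg i]
      by_cases h : μ i = 0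
      · simp [h]
      · rw [Real.logb_mul hN0 h]; ring
    rw [← hN', Finset.sum_congr rfl fun i _ => hpt i, Finset.sum_add_distrib, ← Finset.mul_sum,
      ← Finset.mul_sum]
    have hsum2 : d⁻¹ * ∑ i : V, hL.eigenvalues i = 1 := by
      rw [Finset.mul_sum]; exact hsumμ
    rw [hsum2, mul_one, ← Finset.mul_sum, ← mul_add, inv_mul_cancel_left₀ hN0]
  rw [hS, hR]
  ring

private lemma degreeSum_ne_zero {V : Type*} [Fintype V]
    (G : SimpleGraph V) [DecidableRel G.Adj] (hE : G.edgeSet.Nonempty) :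
    degreeSum G ≠ 0 := by
  obtain ⟨e, he⟩ := hE
  induction e with
  | _ u v =>
    rw [SimpleGraph.mem_edgeSet] at he
    intro h0
    have hu : G.degree u = 0 := by
      have := (Finset.sum_eq_zero_iff.mp h0) u (Finset.mem_univ u)
      exact this
    have : 0 < G.degree u := (G.degree_pos_iff_exists_adj u).mpr ⟨v, he⟩
    omega

end Aux

/-- For a sequence of graphs `Gₙ` on `n` vertices with at least one
edge, if `R(Gₙ)/log₂ n → 0` then `S(Gₙ)/log₂(n-1) → 1`, i.e. `S(Gₙ)/S(Kₙ) → 1`. -/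
theorem entropy_ratio_tendsto_one_of_RG
    (G : (n : ℕ) → SimpleGraph (Fin n)) (hdec : ∀ n, DecidableRel (G n).Adj)
    (hE : ∀ n, 2 ≤ n → (G n).edgeSet.Nonempty)
    (hR : Filter.Tendsto
      (fun n : ℕ => (@RG (Fin n) _ _ (G n) (hdec n)) / Real.logb 2 (n : ℝ))
      Filter.atTop (nhds 0)) :
    Filter.Tendsto
      (fun n : ℕ => (@graphEntropy (Fin n) _ _ (G n) (hdec n)) / Real.logb 2 ((n : ℝ) - 1))
      Filter.atTop (nhds 1) := by
  classical
  -- auxiliary limits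
  have h1 : Filter.Tendsto (fun n : ℕ => (n : ℝ) - 1) Filter.atTop Filter.atTop := by
    simpa [sub_eq_add_neg] using
      Filter.tendsto_atTop_add_const_right Filter.atTop (-1 : ℝ) tendsto_natCast_atTop_atTop
  have hlog1 : Filter.Tendsto (fun n : ℕ => Real.log ((n : ℝ) - 1)) Filter.atTop Filter.atTop :=
    Real.tendsto_log_atTop.comp h1
  have h2 : Filter.Tendsto (fun n : ℕ => (n : ℝ) / ((n : ℝ) - 1)) Filter.atTop (nhds 1) := by
    have base : Filter.Tendsto (fun n : ℕ => 1 + ((n : ℝ) - 1)⁻¹) Filter.atTop (nhds 1) := by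
      simpa using tendsto_const_nhds.add (tendsto_inv_atTop_zero.comp h1)
    refine base.congr' ?_
    filter_upwards [Filter.eventually_atTop.mpr ⟨2, fun n hn => hn⟩] with n hn
    have hne : (n : ℝ) - 1 ≠ 0 := by
      have : (2 : ℝ) ≤ (n : ℝ) := by exact_mod_cast hn
      nlinarith
    field_simp
    ring
  have h3 : Filter.Tendsto (fun n : ℕ => Real.log ((n : ℝ) / ((n : ℝ) - 1)))
      Filter.atTop (nhds 0) := by
    have := ((Real.continuousAt_log one_ne_zero).tendsto).comp h2
    simpa [Real.log_one, Function.comp_def] using this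
  have h4 : Filter.Tendsto
      (fun n : ℕ => Real.log ((n : ℝ) / ((n : ℝ) - 1)) / Real.log ((n : ℝ) - 1))
      Filter.atTop (nhds 0) := h3.div_atTop hlog1
  have hF : Filter.Tendsto (fun n : ℕ => Real.logb 2 (n : ℝ) / Real.logb 2 ((n : ℝ) - 1))
      Filter.atTop (nhds 1) := by
    have base : Filter.Tendsto
        (fun n : ℕ => 1 + Real.log ((n : ℝ) / ((n : ℝ) - 1)) / Real.log ((n : ℝ) - 1))
        Filter.atTop (nhds 1) := by
      simpa using tendsto_const_nhds.add h4
    refine base.congr' ?_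
    filter_upwards [Filter.eventually_atTop.mpr ⟨3, fun n hn => hn⟩] with n hn
    have hn3 : (3 : ℝ) ≤ (n : ℝ) := by exact_mod_cast hn
    have hnpos : (0 : ℝ) < (n : ℝ) := by linarith
    have hn1 : (1 : ℝ) < (n : ℝ) - 1 := by linarith
    have hne : (n : ℝ) - 1 ≠ 0 := by linarith
    have hlogpos : 0 < Real.log ((n : ℝ) - 1) := Real.log_pos hn1
    have hlogne : Real.log ((n : ℝ) - 1) ≠ 0 := ne_of_gt hlogpos
    rw [Real.log_div (ne_of_gt hnpos) hne]
    rw [Real.logb, Real.logb]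
    rw [div_div_div_cancel_right₀]
    · field_simp
      ring
    · exact Real.log_ne_zero_of_pos_of_ne_one (by norm_num) (by norm_num)
  -- tie together
  have key : ∀ n : ℕ, 2 ≤ n →
      (@graphEntropy (Fin n) _ _ (G n) (hdec n)) / Real.logb 2 ((n : ℝ) - 1)
        = Real.logb 2 (n : ℝ) / Real.logb 2 ((n : ℝ) - 1)
          - ((@RG (Fin n) _ _ (G n) (hdec n)) / Real.logb 2 (n : ℝ))
            * (Real.logb 2 (n : ℝ) / Real.logb 2 ((n : ℝ) - 1)) := by
    intro n hn
    have hcard : 0 < Fintype.card (Fin n) := by simp; omega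
    have hd : degreeSum (G n) ≠ 0 := degreeSum_ne_zero (G n) (hE n hn)
    have hSn := entropy_eq_logb_sub_RG (G n) hcard hd
    rw [Fintype.card_fin] at hSn
    rw [hSn]
    have hlogn : Real.logb 2 (n : ℝ) ≠ 0 := by
      have : (1 : ℝ) < (n : ℝ) := by
        have : (2 : ℝ) ≤ (n : ℝ) := by exact_mod_cast hn
        linarith
      exact ne_of_gt (Real.logb_pos (by norm_num) this)
    rw [sub_div]
    congr 1
    rw [div_mul_div_comm, mul_comm (@RG (Fin n) _ _ (G n) (hdec n)) (Real.logb 2 (n : ℝ))]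
    rw [mul_div_mul_left _ _ hlogn]
  have base : Filter.Tendsto
      (fun n : ℕ => Real.logb 2 (n : ℝ) / Real.logb 2 ((n : ℝ) - 1)
        - ((@RG (Fin n) _ _ (G n) (hdec n)) / Real.logb 2 (n : ℝ))
          * (Real.logb 2 (n : ℝ) / Real.logb 2 ((n : ℝ) - 1)))
      Filter.atTop (nhds 1) := by
    have := hF.sub (hR.mul hF)
    simpa using this
  refine base.congr' ?_
  filter_upwards [Filter.eventually_atTop.mpr ⟨2, fun n hn => hn⟩] with n hn
  exact (key n hn).symm
end

section
/- lim_{n→∞} S(K_{1,n−1})/log₂(n−1) = 1/2, i.e., the entropy of the star on n vertices is asymptotically half the entropy of the complete graph K_n. -/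
open Finset Matrix

variable {V : Type*}

/-- The star `K_{1,n-1}` on `Fin n`: the centre `0` is adjacent to all the other
`n - 1` vertices, and there are no other edges. -/
def starGraph (n : ℕ) : SimpleGraph (Fin n) where
  Adj i j := i ≠ j ∧ ((i : ℕ) = 0 ∨ (j : ℕ) = 0)
  symm := ⟨by intro i j h; exact ⟨h.1.symm, h.2.symm⟩⟩
  loopless := ⟨by intro i h; exact h.1 rfl⟩

instance (n : ℕ) : DecidableRel (starGraph n).Adj :=
  fun i j => inferInstanceAs (Decidable (i ≠ j ∧ ((i : ℕ) = 0 ∨ (j : ℕ) = 0)))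

set_option linter.unusedSectionVars false
set_option linter.unusedVariables false
set_option maxHeartbeats 1000000

section StarAux

variable {n : ℕ} [NeZero n]

lemma star_adj (i j : Fin n) : (starGraph n).Adj i j ↔ i ≠ j ∧ (i = 0 ∨ j = 0) := by
  show i ≠ j ∧ ((i : ℕ) = 0 ∨ (j : ℕ) = 0) ↔ _
  rw [Fin.val_eq_zero_iff, Fin.val_eq_zero_iff]

lemma star_deg_zero : (starGraph n).degree (0 : Fin n) = n - 1 := by
  rw [← SimpleGraph.card_neighborFinset_eq_degree]
  have : (starGraph n).neighborFinset (0 : Fin n) = Finset.univ.erase 0 := by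
    ext u
    simp [SimpleGraph.mem_neighborFinset, star_adj, eq_comm, ne_comm]
  rw [this, Finset.card_erase_of_mem (Finset.mem_univ _), Finset.card_univ, Fintype.card_fin]

lemma star_deg_ne (i : Fin n) (hi : i ≠ 0) : (starGraph n).degree i = 1 := by
  rw [← SimpleGraph.card_neighborFinset_eq_degree]
  have : (starGraph n).neighborFinset i = {0} := by
    ext u
    simp only [SimpleGraph.mem_neighborFinset, star_adj, Finset.mem_singleton]
    constructor
    · rintro ⟨h1, h2 | h2⟩
      · exact absurd h2 hi
      · exact h2
    · rintro rfl; exact ⟨hi, Or.inr rfl⟩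
  rw [this, Finset.card_singleton]

lemma degreeSum_star : degreeSum (starGraph n) = 2 * (n - 1) := by
  unfold degreeSum
  rw [← Finset.add_sum_erase _ _ (Finset.mem_univ (0 : Fin n))]
  rw [star_deg_zero]
  have h1 : ∀ v ∈ Finset.univ.erase (0 : Fin n), (starGraph n).degree v = 1 := by
    intro v hv
    exact star_deg_ne v (Finset.mem_erase.mp hv).1
  rw [Finset.sum_congr rfl h1, Finset.sum_const, smul_eq_mul, mul_one,
    Finset.card_erase_of_mem (Finset.mem_univ _), Finset.card_univ, Fintype.card_fin]
  omega

noncomputable abbrev Lm (n : ℕ) : Matrix (Fin n) (Fin n) ℝ := (starGraph n).lapMatrix ℝ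

lemma Lm_apply (i j : Fin n) : Lm n i j =
    if i = j then (if i = 0 then (n : ℝ) - 1 else 1)
    else (if i = 0 ∨ j = 0 then -1 else 0) := by
  have : Lm n i j = (if i = j then ((starGraph n).degree i : ℝ) else 0) - (if (starGraph n).Adj i j then 1 else 0) := by
    simp [Lm, SimpleGraph.lapMatrix, SimpleGraph.degMatrix, Matrix.diagonal_apply, Matrix.sub_apply]
  rw [this]
  by_cases hij : i = j
  · subst hij
    simp only [if_pos rfl, (starGraph n).irrefl, if_neg (by simp : ¬(starGraph n).Adj i i)]
    by_cases hi : i = 0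
    · subst hi
      rw [star_deg_zero]
      simp [Nat.cast_sub (Nat.one_le_iff_ne_zero.mpr (NeZero.ne n))]
    · rw [star_deg_ne i hi]
      simp [hi]
  · rw [if_neg hij, if_neg hij, zero_sub]
    by_cases h : i = 0 ∨ j = 0
    · rw [if_pos h, if_pos ((star_adj i j).mpr ⟨hij, h⟩)]
    · rw [if_neg h, if_neg (fun hadj => h ((star_adj i j).mp hadj).2), neg_zero]

lemma Lm_row_sum (i : Fin n) : ∑ k, Lm n i k = 0 := by
  have h := congrFun (SimpleGraph.lapMatrix_mulVec_const_eq_zero (R := ℝ) (G := starGraph n)) i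
  simpa [Matrix.mulVec, dotProduct] using h

lemma Lm_col_sum (j : Fin n) : ∑ k, Lm n k j = 0 := by
  have hs : ∀ k, Lm n k j = Lm n j k := by
    intro k
    rw [Lm_apply, Lm_apply]
    by_cases h : k = j
    · subst h; rfl
    · rw [if_neg h, if_neg (Ne.symm h)]
      simp [or_comm]
  simp_rw [hs]
  exact Lm_row_sum j

lemma mul_Lm_col_sum (B : Matrix (Fin n) (Fin n) ℝ) (hB : ∀ j, ∑ k, B k j = 0) (j : Fin n) :
    ∑ k, (Lm n * B) k j = 0 := by
  simp_rw [Matrix.mul_apply]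
  rw [Finset.sum_comm]
  simp_rw [← Finset.sum_mul, Lm_col_sum]
  simp

lemma Lm_mul_zero_row (B : Matrix (Fin n) (Fin n) ℝ) (hB : ∀ j, ∑ k, B k j = 0) (j : Fin n) :
    (Lm n * B) 0 j = n * B 0 j := by
  rw [Matrix.mul_apply]
  rw [← Finset.add_sum_erase _ _ (Finset.mem_univ (0 : Fin n))]
  have h1 : ∀ k ∈ Finset.univ.erase (0 : Fin n), Lm n 0 k * B k j = -1 * B k j := by
    intro k hk
    rw [Lm_apply, if_neg (Ne.symm (Finset.mem_erase.mp hk).1), if_pos (Or.inl rfl)]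
  rw [Finset.sum_congr rfl h1, Lm_apply, if_pos rfl, if_pos rfl]
  have h2 : ∑ k ∈ Finset.univ.erase (0 : Fin n), B k j = -B 0 j := by
    have := hB j
    rw [← Finset.add_sum_erase _ _ (Finset.mem_univ (0 : Fin n))] at this
    linarith
  have h3 : ∑ k ∈ Finset.univ.erase (0 : Fin n), -1 * B k j = B 0 j := by
    simp_rw [neg_one_mul]
    rw [Finset.sum_neg_distrib, h2, neg_neg]
  rw [h3]
  ring

lemma Lm_mul_ne_row (B : Matrix (Fin n) (Fin n) ℝ) (i j : Fin n) (hi : i ≠ 0) :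
    (Lm n * B) i j = -B 0 j + B i j := by
  rw [Matrix.mul_apply]
  have hsupp : ∀ k ∈ Finset.univ, k ∉ ({0, i} : Finset (Fin n)) → Lm n i k * B k j = 0 := by
    intro k _ hk
    simp only [Finset.mem_insert, Finset.mem_singleton, not_or] at hk
    rw [Lm_apply, if_neg (fun h => hk.2 h.symm), if_neg (by tauto), zero_mul]
  rw [← Finset.sum_subset (Finset.subset_univ ({0, i} : Finset (Fin n))) hsupp]
  rw [Finset.sum_pair (Ne.symm hi)]
  rw [Lm_apply, Lm_apply, if_neg hi, if_pos (Or.inr rfl), if_pos rfl, if_neg hi]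
  ring

lemma Lm_sq_zero_row (j : Fin n) : (Lm n * Lm n) 0 j = n * Lm n 0 j :=
  Lm_mul_zero_row (Lm n) Lm_col_sum j

lemma Lm_sq_ne_row (i j : Fin n) (hi : i ≠ 0) :
    (Lm n * Lm n) i j = -Lm n 0 j + Lm n i j :=
  Lm_mul_ne_row (Lm n) i j hi

lemma Lm_cubic : Lm n * Lm n * Lm n = ((n : ℝ) + 1) • (Lm n * Lm n) - (n : ℝ) • Lm n := by
  rw [mul_assoc]
  ext i j
  simp only [Matrix.sub_apply, Matrix.smul_apply, smul_eq_mul]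
  by_cases hi : i = 0
  · subst hi
    rw [Lm_mul_zero_row (Lm n * Lm n) (mul_Lm_col_sum (Lm n) Lm_col_sum)]
    rw [Lm_sq_zero_row]
    ring
  · rw [Lm_mul_ne_row (Lm n * Lm n) i j hi, Lm_sq_zero_row, Lm_sq_ne_row i j hi]
    ring

lemma Lm_trace : (Lm n).trace = 2 * ((n : ℝ) - 1) := by
  rw [Matrix.trace]
  simp_rw [Matrix.diag_apply]
  rw [← Finset.add_sum_erase _ _ (Finset.mem_univ (0 : Fin n))]
  have h1 : ∀ k ∈ Finset.univ.erase (0 : Fin n), Lm n k k = 1 := by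
    intro k hk
    rw [Lm_apply, if_pos rfl, if_neg (Finset.mem_erase.mp hk).1]
  rw [Finset.sum_congr rfl h1, Finset.sum_const, Lm_apply, if_pos rfl, if_pos rfl,
    Finset.card_erase_of_mem (Finset.mem_univ _), Finset.card_univ, Fintype.card_fin,
    nsmul_eq_mul, mul_one, Nat.cast_sub (Nat.one_le_iff_ne_zero.mpr (NeZero.ne n)), Nat.cast_one]
  ring

lemma Lm_sq_trace : (Lm n * Lm n).trace = ((n : ℝ) - 1) * ((n : ℝ) + 2) := by
  rw [Matrix.trace]
  simp_rw [Matrix.diag_apply]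
  rw [← Finset.add_sum_erase _ _ (Finset.mem_univ (0 : Fin n))]
  have h1 : ∀ k ∈ Finset.univ.erase (0 : Fin n), (Lm n * Lm n) k k = 2 := by
    intro k hk
    have hk0 := (Finset.mem_erase.mp hk).1
    rw [Lm_sq_ne_row k k hk0, Lm_apply, Lm_apply, if_pos rfl, if_neg hk0,
      if_neg (Ne.symm hk0), if_pos (Or.inl rfl)]
    norm_num
  rw [Finset.sum_congr rfl h1, Finset.sum_const, Lm_sq_zero_row, Lm_apply, if_pos rfl, if_pos rfl,
    Finset.card_erase_of_mem (Finset.mem_univ _), Finset.card_univ, Fintype.card_fin,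
    nsmul_eq_mul, Nat.cast_sub (Nat.one_le_iff_ne_zero.mpr (NeZero.ne n)), Nat.cast_one]
  ring


end StarAux

section SpecAux
variable {ι : Type*} [Fintype ι] [DecidableEq ι]

lemma aux_UstarU {A : Matrix ι ι ℝ} (hA : A.IsHermitian) :
    (hA.eigenvectorUnitary : Matrix ι ι ℝ) * star (hA.eigenvectorUnitary : Matrix ι ι ℝ) = 1 :=
  (Matrix.mem_unitaryGroup_iff).mp hA.eigenvectorUnitary.2

lemma trace_eq_sum_eigs {A : Matrix ι ι ℝ} (hA : A.IsHermitian) :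
    A.trace = ∑ i, hA.eigenvalues i := by
  have key := congrArg Matrix.trace ((Unitary.conjStarAlgAut_star_apply (S := ℝ) _ _).symm.trans hA.conjStarAlgAut_star_eigenvectorUnitary)
  rw [Matrix.trace_mul_cycle, aux_UstarU hA, one_mul] at key
  rw [key, Matrix.trace_diagonal]
  simp [RCLike.ofReal]

lemma trace_sq_eq_sum_eigs_sq {A : Matrix ι ι ℝ} (hA : A.IsHermitian) :
    (A * A).trace = ∑ i, hA.eigenvalues i ^ 2 := by
  have key := ((Unitary.conjStarAlgAut_star_apply (S := ℝ) _ _).symm.trans hA.conjStarAlgAut_star_eigenvectorUnitary)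
  have key2 : star (hA.eigenvectorUnitary : Matrix ι ι ℝ) * (A * A) *
      (hA.eigenvectorUnitary : Matrix ι ι ℝ)
      = Matrix.diagonal (fun i => hA.eigenvalues i ^ 2) := by
    have : (star (hA.eigenvectorUnitary : Matrix ι ι ℝ) * A *
        (hA.eigenvectorUnitary : Matrix ι ι ℝ)) *
        (star (hA.eigenvectorUnitary : Matrix ι ι ℝ) * A *
        (hA.eigenvectorUnitary : Matrix ι ι ℝ)) =
        star (hA.eigenvectorUnitary : Matrix ι ι ℝ) * (A * A) *
        (hA.eigenvectorUnitary : Matrix ι ι ℝ) := by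
      have h1 : (hA.eigenvectorUnitary : Matrix ι ι ℝ) *
          star (hA.eigenvectorUnitary : Matrix ι ι ℝ) = 1 := aux_UstarU hA
      calc (star (hA.eigenvectorUnitary : Matrix ι ι ℝ) * A *
        (hA.eigenvectorUnitary : Matrix ι ι ℝ)) *
        (star (hA.eigenvectorUnitary : Matrix ι ι ℝ) * A *
        (hA.eigenvectorUnitary : Matrix ι ι ℝ))
          = star (hA.eigenvectorUnitary : Matrix ι ι ℝ) * A *
            (((hA.eigenvectorUnitary : Matrix ι ι ℝ) *
            star (hA.eigenvectorUnitary : Matrix ι ι ℝ)) * A *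
            (hA.eigenvectorUnitary : Matrix ι ι ℝ)) := by
            simp only [mul_assoc]
        _ = _ := by rw [h1, one_mul]; simp only [mul_assoc]
    rw [← this, key, Matrix.diagonal_mul_diagonal]
    congr 1
    funext i
    simp [RCLike.ofReal, sq]
  have := congrArg Matrix.trace key2
  rw [Matrix.trace_mul_cycle, aux_UstarU hA, one_mul] at this
  rw [this, Matrix.trace_diagonal]

lemma eig_vanish_of_cubic {A : Matrix ι ι ℝ} (hA : A.IsHermitian) (c2 c1 : ℝ)
    (hcube : A * A * A = c2 • (A * A) + c1 • A) (i : ι) :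
    hA.eigenvalues i ^ 3 = c2 * hA.eigenvalues i ^ 2 + c1 * hA.eigenvalues i := by
  set lam := hA.eigenvalues i with hlam
  set v : ι → ℝ := ⇑(hA.eigenvectorBasis i) with hv
  have hAv : A *ᵥ v = lam • v := hA.mulVec_eigenvectorBasis i
  have hv0 : v ≠ 0 := by
    intro h
    apply hA.eigenvectorBasis.orthonormal.ne_zero i
    ext1 j
    exact congrFun h j
  obtain ⟨j, hj⟩ := Function.ne_iff.mp hv0
  have hA2v : (A * A) *ᵥ v = (lam ^ 2) • v := by
    rw [← Matrix.mulVec_mulVec, hAv, Matrix.mulVec_smul, hAv, smul_smul, sq]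
  have hA3v : (A * A * A) *ᵥ v = (lam ^ 3) • v := by
    rw [← Matrix.mulVec_mulVec, hAv, Matrix.mulVec_smul, hA2v, smul_smul]
    ring_nf
  have := congrFun (congrArg (fun M => M *ᵥ v) hcube) j
  simp only [hA3v, Matrix.add_mulVec, Matrix.smul_mulVec, hA2v, hAv,
    Pi.add_apply, Pi.smul_apply, smul_eq_mul, smul_smul] at this
  have h2 : (lam ^ 3) * v j = (c2 * lam ^ 2 + c1 * lam) * v j := by
    rw [this]; ring
  exact mul_right_cancel₀ hj h2

end SpecAux


section EntropyFormula

lemma entropy_star_formula (n : ℕ) (hn : 3 ≤ n) :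
    graphEntropy (starGraph n) =
      Real.logb 2 (2 * ((n : ℝ) - 1)) - (n : ℝ) / (2 * ((n : ℝ) - 1)) * Real.logb 2 (n : ℝ) := by
  haveI : NeZero n := ⟨by omega⟩
  obtain ⟨x, hx⟩ : ∃ x : ℝ, x = (n : ℝ) := ⟨_, rfl⟩
  have hx3 : (3 : ℝ) ≤ x := by rw [hx]; exact_mod_cast hn
  have hx1 : (0:ℝ) < x - 1 := by linarith
  have hx0 : x ≠ 0 := by linarith
  have hx1' : x - 1 ≠ 0 := ne_of_gt hx1
  have hd : ((degreeSum (starGraph n) : ℝ)) = 2 * (x - 1) := by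
    rw [degreeSum_star, hx]
    push_cast [Nat.cast_sub (by omega : 1 ≤ n)]
    ring
  obtain ⟨c, hc⟩ : ∃ c : ℝ, c = (2 * (x - 1))⁻¹ := ⟨_, rfl⟩
  have hc0 : c ≠ 0 := by rw [hc]; exact inv_ne_zero (by positivity)
  have hρdef : densityMatrix (starGraph n) = c • Lm n := by
    rw [densityMatrix, hd, hc]
  have hL : (Lm n).IsHermitian := (SimpleGraph.posSemidef_lapMatrix ℝ (starGraph n)).1
  have hρ : (densityMatrix (starGraph n)).IsHermitian := by
    rw [hρdef]
    show (c • Lm n)ᴴ = c • Lm n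
    rw [Matrix.conjTranspose_smul, show star c = c from rfl, hL.eq]
  obtain ⟨lam, hlam⟩ : ∃ lam : Fin n → ℝ, lam = hρ.eigenvalues := ⟨_, rfl⟩
  have hρ2 : densityMatrix (starGraph n) * densityMatrix (starGraph n)
      = (c * c) • (Lm n * Lm n) := by
    rw [hρdef, smul_mul_assoc, mul_smul_comm, smul_smul]
  have hρ3 : densityMatrix (starGraph n) * densityMatrix (starGraph n) * densityMatrix (starGraph n)
      = (c * c * c) • (Lm n * Lm n * Lm n) := by
    rw [hρ2, hρdef, smul_mul_assoc, mul_smul_comm, smul_smul]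
  have hcube : densityMatrix (starGraph n) * densityMatrix (starGraph n) * densityMatrix (starGraph n)
      = ((x + 1) * c) • (densityMatrix (starGraph n) * densityMatrix (starGraph n))
        + (-(x * (c * c))) • densityMatrix (starGraph n) := by
    rw [hρ3, show (Lm n * Lm n * Lm n : Matrix (Fin n) (Fin n) ℝ)
        = ((n : ℝ) + 1) • (Lm n * Lm n) - (n : ℝ) • Lm n from Lm_cubic,
      hρ2, hρdef, smul_smul, smul_smul, smul_sub, smul_smul, smul_smul,
      sub_eq_add_neg, ← neg_smul, ← hx]
    congr 1
    · congr 1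
      ring
    · congr 1
      ring
  have hmem : ∀ i, lam i = 0 ∨ lam i = c ∨ lam i = x * c := by
    intro i
    have h := eig_vanish_of_cubic hρ _ _ hcube i
    rw [← hlam] at h
    have hfact : lam i * (lam i - c) * (lam i - x * c) = 0 := by
      linear_combination h
    rcases mul_eq_zero.mp hfact with h' | h'
    · rcases mul_eq_zero.mp h' with h'' | h''
      · exact Or.inl h''
      · exact Or.inr (Or.inl (sub_eq_zero.mp h''))
    · exact Or.inr (Or.inr (sub_eq_zero.mp h'))
  have hT1 : ∑ i, lam i = 1 := by
    have h : (densityMatrix (starGraph n)).trace = ∑ i, lam i := by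
      rw [hlam]; exact trace_eq_sum_eigs hρ
    rw [hρdef, Matrix.trace_smul, Lm_trace, smul_eq_mul, ← hx] at h
    rw [← h, hc]
    field_simp
  have hT2 : ∑ i, lam i ^ 2 = (c * c) * ((x - 1) * (x + 2)) := by
    have h : (densityMatrix (starGraph n) * densityMatrix (starGraph n)).trace
        = ∑ i, lam i ^ 2 := by
      rw [hlam]; exact trace_sq_eq_sum_eigs_sq hρ
    rw [hρ2, Matrix.trace_smul, Lm_sq_trace, smul_eq_mul, ← hx] at h
    rw [← h]
  have hb0 : x * c ≠ 0 := mul_ne_zero hx0 hc0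
  have hab : c ≠ x * c := by
    intro h
    have h2 : (x - 1) * c = 0 := by linear_combination -h
    rcases mul_eq_zero.mp h2 with h' | h'
    · exact hx1' h'
    · exact hc0 h'
  have hden1 : c ^ 2 - c * (x * c) ≠ 0 := by
    have h : c ^ 2 - c * (x * c) = c * (c - x * c) := by ring
    rw [h]
    exact mul_ne_zero hc0 (sub_ne_zero.mpr hab)
  have hden2 : (x * c) ^ 2 - c * (x * c) ≠ 0 := by
    have h : (x * c) ^ 2 - c * (x * c) = (x * c) * (x * c - c) := by ring
    rw [h]
    exact mul_ne_zero hb0 (sub_ne_zero.mpr (Ne.symm hab))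
  have key : ∀ i, lam i * Real.logb 2 (lam i) =
      (lam i ^ 2 - (x * c) * lam i) * ((c * Real.logb 2 c) / (c ^ 2 - c * (x * c))) +
      (lam i ^ 2 - c * lam i) * (((x * c) * Real.logb 2 (x * c)) / ((x * c) ^ 2 - c * (x * c))) := by
    intro i
    rcases hmem i with h | h | h <;> rw [h]
    · simp
    · have h1x : (1:ℝ) - x ≠ 0 := fun h0 => hx1' (by linarith)
      field_simp
      ring
    · field_simp
      ring
  have hsum : ∑ i, lam i * Real.logb 2 (lam i) =
      ((∑ i, lam i ^ 2) - (x * c) * ∑ i, lam i) * ((c * Real.logb 2 c) / (c ^ 2 - c * (x * c))) +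
      ((∑ i, lam i ^ 2) - c * ∑ i, lam i) *
        (((x * c) * Real.logb 2 (x * c)) / ((x * c) ^ 2 - c * (x * c))) := by
    rw [Finset.sum_congr rfl (fun i _ => key i), Finset.sum_add_distrib,
      ← Finset.sum_mul, ← Finset.sum_mul, Finset.sum_sub_distrib, Finset.sum_sub_distrib,
      ← Finset.mul_sum, ← Finset.mul_sum]
  have hent : graphEntropy (starGraph n) = -∑ i, lam i * Real.logb 2 (lam i) := by
    rw [graphEntropy, matEntropy, dif_pos hρ, hlam]
  have hla : Real.logb 2 c = -Real.logb 2 (2 * (x - 1)) := by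
    rw [hc, Real.logb_inv]
  have hlb : Real.logb 2 (x * c) = Real.logb 2 x - Real.logb 2 (2 * (x - 1)) := by
    rw [hc, Real.logb_mul hx0 (inv_ne_zero (by positivity)), Real.logb_inv]
    ring
  have hrel : c * (2 * (x - 1)) = 1 := by
    rw [hc]
    field_simp
  have hco1 : c * c * ((x - 1) * (x + 2)) - x * c * 1 = (x - 2) * (c ^ 2 - c * (x * c)) := by
    linear_combination (x * c) * hrel
  have hco2 : c * c * ((x - 1) * (x + 2)) - c * 1 = 1 * ((x * c) ^ 2 - c * (x * c)) := by
    linear_combination c * hrel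
  have hcancel : ∀ (D fa coef : ℝ), D ≠ 0 → (coef * D) * (fa / D) = coef * fa := by
    intro D fa coef hD
    field_simp
  rw [hent, hsum, hT1, hT2, hco1, hco2,
    hcancel _ _ _ hden1, hcancel _ _ _ hden2, hla, hlb, ← hx, hc]
  have h2x : (2 : ℝ) * (x - 1) ≠ 0 := by positivity
  field_simp
  ring

end EntropyFormula

/-- `S(K_{1,n-1})/log₂(n-1) → 1/2` as `n → ∞`: the entropy of the
star is asymptotically half the entropy of the complete graph `Kₙ`. -/
theorem entropy_star_ratio_tendsto_half :
    Filter.Tendsto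
      (fun n : ℕ => graphEntropy (starGraph n) / Real.logb 2 ((n : ℝ) - 1))
      Filter.atTop (nhds (1 / 2)) := by
  have hx1 : Filter.Tendsto (fun n : ℕ => (n : ℝ) - 1) Filter.atTop Filter.atTop := by
    simpa [sub_eq_add_neg] using
      Filter.tendsto_atTop_add_const_right Filter.atTop (-1 : ℝ) tendsto_natCast_atTop_atTop
  have hl : Filter.Tendsto (fun n : ℕ => Real.logb 2 ((n : ℝ) - 1)) Filter.atTop Filter.atTop :=
    (Real.tendsto_logb_atTop one_lt_two).comp hx1
  have hinv : Filter.Tendsto (fun n : ℕ => (Real.logb 2 ((n : ℝ) - 1))⁻¹)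
      Filter.atTop (nhds 0) := hl.inv_tendsto_atTop
  have hxinv : Filter.Tendsto (fun n : ℕ => ((n : ℝ) - 1)⁻¹) Filter.atTop (nhds 0) :=
    hx1.inv_tendsto_atTop
  have hg : Filter.Tendsto (fun n : ℕ => (n : ℝ) / (2 * ((n : ℝ) - 1)))
      Filter.atTop (nhds (1 / 2)) := by
    have h1 : Filter.Tendsto (fun n : ℕ => 1 / 2 + 1 / 2 * ((n : ℝ) - 1)⁻¹)
        Filter.atTop (nhds (1 / 2)) := by
      have := (tendsto_const_nhds (x := (1/2 : ℝ)) (f := Filter.atTop (α := ℕ))).add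
        ((tendsto_const_nhds (x := (1/2 : ℝ)) (f := Filter.atTop (α := ℕ))).mul hxinv)
      simpa using this
    apply h1.congr'
    filter_upwards [Filter.eventually_ge_atTop 2] with n hn
    have hx : (1:ℝ) < (n : ℝ) := by exact_mod_cast Nat.lt_of_lt_of_le one_lt_two hn
    have hne : (n : ℝ) - 1 ≠ 0 := by linarith
    field_simp
    try ring
  have he : Filter.Tendsto (fun n : ℕ => Real.logb 2 (1 + ((n : ℝ) - 1)⁻¹))
      Filter.atTop (nhds 0) := by
    have hlog : Filter.Tendsto (fun n : ℕ => Real.log (1 + ((n : ℝ) - 1)⁻¹))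
        Filter.atTop (nhds 0) := by
      have h1 : Filter.Tendsto (fun n : ℕ => 1 + ((n : ℝ) - 1)⁻¹)
          Filter.atTop (nhds 1) := by
        have := (tendsto_const_nhds (x := (1 : ℝ)) (f := Filter.atTop (α := ℕ))).add hxinv
        simpa using this
      have h2 := (Real.continuousAt_log one_ne_zero).tendsto.comp h1
      simpa [Function.comp_def] using h2
    have := hlog.div_const (Real.log 2)
    simpa [Real.logb, zero_div] using this
  have hH : Filter.Tendsto (fun n : ℕ =>
      (Real.logb 2 ((n : ℝ) - 1))⁻¹ + 1 - (n : ℝ) / (2 * ((n : ℝ) - 1))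
        - ((n : ℝ) / (2 * ((n : ℝ) - 1))) * Real.logb 2 (1 + ((n : ℝ) - 1)⁻¹)
          * (Real.logb 2 ((n : ℝ) - 1))⁻¹)
      Filter.atTop (nhds (1 / 2)) := by
    have := ((hinv.add (tendsto_const_nhds (x := (1:ℝ)))).sub hg).sub ((hg.mul he).mul hinv)
    norm_num at this
    convert this using 2
    try norm_num
  apply hH.congr'
  filter_upwards [Filter.eventually_ge_atTop 3] with n hn
  have hx3 : (3 : ℝ) ≤ (n : ℝ) := by exact_mod_cast hn
  have hx1' : (0:ℝ) < (n : ℝ) - 1 := by linarith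
  have hx1n : (n : ℝ) - 1 ≠ 0 := ne_of_gt hx1'
  have hx0 : (n : ℝ) ≠ 0 := by linarith
  have hlpos : 0 < Real.logb 2 ((n : ℝ) - 1) :=
    Real.logb_pos one_lt_two (by linarith)
  have hlne : Real.logb 2 ((n : ℝ) - 1) ≠ 0 := ne_of_gt hlpos
  rw [entropy_star_formula n hn]
  have l2x : Real.logb 2 (2 * ((n : ℝ) - 1)) = 1 + Real.logb 2 ((n : ℝ) - 1) := by
    rw [Real.logb_mul two_ne_zero hx1n]
    norm_num
  have l2n : Real.logb 2 (n : ℝ)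
      = Real.logb 2 ((n : ℝ) - 1) + Real.logb 2 (1 + ((n : ℝ) - 1)⁻¹) := by
    rw [← Real.logb_mul hx1n (by positivity : (1 + ((n : ℝ) - 1)⁻¹) ≠ 0)]
    congr 1
    field_simp
    ring
  rw [l2x, l2n]
  field_simp
  ring
end

section
/- Let G be a simple graph with at least one edge, let ñ be its number of non-isolated vertices, and let d̄_G = d_G/ñ be the average degree over the non-isolated vertices. Then every eigenvalue λ of the density matrix ρ_G satisfies 0 ≤ λ ≤ 1/d̄_G. -/
open Finset Matrix

variable {V : Type*}

/-- Quadratic form bound: `x ⬝ L x ≤ ñ ∑ x v ^ 2`. -/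
lemma lap_quad_le [Fintype V] [DecidableEq V]
    (G : SimpleGraph V) [DecidableRel G.Adj] (x : V → ℝ) :
    x ⬝ᵥ (G.lapMatrix ℝ *ᵥ x) ≤
      ((Finset.univ.filter fun v : V => 0 < G.degree v).card : ℝ) * ∑ v : V, x v ^ 2 := by
  set W : Finset V := Finset.univ.filter fun v : V => 0 < G.degree v with hW
  rw [← Matrix.toLinearMap₂'_apply', SimpleGraph.lapMatrix_toLinearMap₂']
  have step1 : (∑ i : V, ∑ j : V, if G.Adj i j then (x i - x j)^2 else 0)
      ≤ ∑ i ∈ W, ∑ j ∈ W, (x i - x j)^2 := by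
    have : (∑ i : V, ∑ j : V, if G.Adj i j then (x i - x j)^2 else 0)
        = ∑ i : V, ∑ j : V, if i ∈ W ∧ j ∈ W ∧ G.Adj i j then (x i - x j)^2 else 0 := by
      refine Finset.sum_congr rfl fun i _ => Finset.sum_congr rfl fun j _ => ?_
      by_cases hadj : G.Adj i j
      · have hi : i ∈ W := by
          simp [hW, SimpleGraph.degree_pos_iff_exists_adj]; exact ⟨j, hadj⟩
        have hj : j ∈ W := by
          simp [hW, SimpleGraph.degree_pos_iff_exists_adj]; exact ⟨i, hadj.symm⟩
        simp [hadj, hi, hj]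
      · simp [hadj]
    rw [this]
    calc ∑ i : V, ∑ j : V, (if i ∈ W ∧ j ∈ W ∧ G.Adj i j then (x i - x j)^2 else 0)
        ≤ ∑ i : V, ∑ j : V, (if i ∈ W ∧ j ∈ W then (x i - x j)^2 else 0) := by
          refine Finset.sum_le_sum fun i _ => Finset.sum_le_sum fun j _ => ?_
          by_cases hij : i ∈ W ∧ j ∈ W ∧ G.Adj i j
          · simp [hij, hij.1, hij.2.1]
          · simp only [hij, if_false]
            split <;> positivity
      _ = ∑ i ∈ W, ∑ j ∈ W, (x i - x j)^2 := by
          have hin : ∀ i : V, (∑ j : V, if i ∈ W ∧ j ∈ W then (x i - x j)^2 else 0)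
              = if i ∈ W then ∑ j ∈ W, (x i - x j)^2 else 0 := by
            intro i
            by_cases hi : i ∈ W
            · simp only [hi, true_and, if_true]
              rw [Finset.sum_ite_mem, Finset.univ_inter]
            · simp [hi]
          rw [Finset.sum_congr rfl fun i _ => hin i, Finset.sum_ite_mem, Finset.univ_inter]
  have step2 : ∑ i ∈ W, ∑ j ∈ W, (x i - x j)^2
      ≤ 2 * ((W.card : ℝ) * ∑ v ∈ W, x v ^ 2) := by
    have expand : ∑ i ∈ W, ∑ j ∈ W, (x i - x j)^2
        = 2 * ((W.card : ℝ) * ∑ v ∈ W, x v ^ 2) - 2 * (∑ v ∈ W, x v)^2 := by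
      have inner : ∀ i : V, ∑ j ∈ W, (x i - x j)^2
          = (W.card : ℝ) * x i ^ 2 - 2 * x i * (∑ j ∈ W, x j) + ∑ j ∈ W, x j ^ 2 := by
        intro i
        have : ∀ j ∈ W, (x i - x j)^2 = x i ^ 2 - 2 * x i * x j + x j ^ 2 :=
          fun j _ => by ring
        rw [Finset.sum_congr rfl this, Finset.sum_add_distrib, Finset.sum_sub_distrib,
          Finset.sum_const, ← Finset.mul_sum, nsmul_eq_mul]
      rw [Finset.sum_congr rfl fun i _ => inner i, Finset.sum_add_distrib,
        Finset.sum_sub_distrib, ← Finset.mul_sum, ← Finset.sum_mul, Finset.sum_const,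
        nsmul_eq_mul,
        show (∑ v ∈ W, 2 * x v) = 2 * ∑ v ∈ W, x v from (Finset.mul_sum _ _ _).symm]
      ring
    nlinarith [sq_nonneg (∑ v ∈ W, x v)]
  have step3 : ∑ v ∈ W, x v ^ 2 ≤ ∑ v : V, x v ^ 2 :=
    Finset.sum_le_sum_of_subset_of_nonneg (Finset.subset_univ W)
      (fun v _ _ => sq_nonneg _)
  have hcard : (0:ℝ) ≤ (W.card : ℝ) := Nat.cast_nonneg _
  calc (∑ i : V, ∑ j : V, if G.Adj i j then (x i - x j)^2 else 0) / 2
      ≤ (2 * ((W.card : ℝ) * ∑ v ∈ W, x v ^ 2)) / 2 := by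
        have := step1.trans step2
        linarith
    _ = (W.card : ℝ) * ∑ v ∈ W, x v ^ 2 := by ring
    _ ≤ (W.card : ℝ) * ∑ v : V, x v ^ 2 := by
        exact mul_le_mul_of_nonneg_left step3 hcard

/-- For a graph `G` with at least one edge, with `ñ` non-isolated
vertices and average degree `d̄_G = d_G/ñ` over the non-isolated vertices, every
eigenvalue `λ` of the density matrix `ρ_G` satisfies `0 ≤ λ ≤ 1/d̄_G = ñ/d_G`. -/
theorem density_eigenvalue_bounds [Fintype V] [DecidableEq V]
    (G : SimpleGraph V) [DecidableRel G.Adj] (hE : G.edgeSet.Nonempty)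
    (h : (densityMatrix G).IsHermitian) (i : V) :
    0 ≤ h.eigenvalues i ∧
    h.eigenvalues i ≤
      (((Finset.univ.filter fun v : V => 0 < G.degree v).card : ℝ) / (degreeSum G : ℝ)) := by
  have hd : 0 < degreeSum G := by
    rw [degreeSum, SimpleGraph.sum_degrees_eq_twice_card_edges]
    obtain ⟨e, he⟩ := hE
    have : G.edgeFinset.Nonempty := ⟨e, SimpleGraph.mem_edgeFinset.mpr he⟩
    have := Finset.card_pos.mpr this
    omega
  have hdR : (0:ℝ) < (degreeSum G : ℝ) := by exact_mod_cast hd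
  have hpsd : (densityMatrix G).PosSemidef := by
    refine Matrix.PosSemidef.of_dotProduct_mulVec_nonneg h fun x => ?_
    rw [densityMatrix, smul_mulVec, dotProduct_smul]
    exact smul_nonneg (inv_nonneg.2 hdR.le) ((SimpleGraph.posSemidef_lapMatrix ℝ G).dotProduct_mulVec_nonneg x)
  refine ⟨hpsd.eigenvalues_nonneg i, ?_⟩
  -- eigenvector argument
  set x : V → ℝ := ⇑(h.eigenvectorBasis i) with hx
  have hmul : densityMatrix G *ᵥ x = h.eigenvalues i • x := h.mulVec_eigenvectorBasis i
  have hnorm : ∑ v : V, x v * x v = 1 := by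
    have horth := h.eigenvectorBasis.orthonormal
    rw [orthonormal_iff_ite] at horth
    have h1 := horth i i
    simp only [if_pos rfl] at h1
    rw [PiLp.inner_apply] at h1
    simpa [hx, pow_two] using h1
  have hquad : x ⬝ᵥ (densityMatrix G *ᵥ x) = h.eigenvalues i := by
    rw [hmul, dotProduct_smul, smul_eq_mul, dotProduct]
    rw [hnorm, mul_one]
  have hbound : x ⬝ᵥ (densityMatrix G *ᵥ x)
      ≤ ((Finset.univ.filter fun v : V => 0 < G.degree v).card : ℝ) / (degreeSum G : ℝ) := by
    rw [densityMatrix, smul_mulVec, dotProduct_smul, smul_eq_mul]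
    have := lap_quad_le G x
    have hsq : ∑ v : V, x v ^ 2 = 1 := by
      simpa [pow_two] using hnorm
    rw [hsq, mul_one] at this
    rw [div_eq_inv_mul]
    exact mul_le_mul_of_nonneg_left this (inv_nonneg.2 hdR.le)
  linarith [hquad ▸ hbound]
end

section
/- Let (G_n) be any sequence of simple graphs, G_n on n vertices with no isolated vertices, and let ρ̂_{G_n} = 𝓛(G_n)/n, where 𝓛 is the normalized Laplacian. Then lim_{n→∞} S(ρ̂_{G_n})/log₂ n = 1; i.e., the entropy of the normalized-Laplacian density matrix is always asymptotically equal to S(ρ_{K_n}) = log₂(n−1). -/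
open Finset Matrix

variable {V : Type*}

/-- The normalized Laplacian `𝓛(G) = Δ^{-1/2} L(G) Δ^{-1/2}` (with the convention
`[Δ^{-1/2}]_{vv} = 0` when `d(v) = 0`, automatic here since `(√0)⁻¹ = 0`). -/
noncomputable def normalizedLapMatrix [Fintype V] [DecidableEq V]
    (G : SimpleGraph V) [DecidableRel G.Adj] : Matrix V V ℝ :=
  Matrix.diagonal (fun v => (Real.sqrt (G.degree v))⁻¹) * G.lapMatrix ℝ *
    Matrix.diagonal (fun v => (Real.sqrt (G.degree v))⁻¹)

section Aux

variable [Fintype V] [DecidableEq V]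

/-- Auxiliary: quadratic form of the signless Laplacian. -/
theorem aux_signless_quad (G : SimpleGraph V) [DecidableRel G.Adj] (x : V → ℝ) :
    x ⬝ᵥ ((G.degMatrix ℝ + G.adjMatrix ℝ) *ᵥ x) =
    (∑ i : V, ∑ j : V, if G.Adj i j then (x i + x j)^2 else 0) / 2 := by
  simp_rw [add_mulVec, dotProduct_add, SimpleGraph.dotProduct_mulVec_degMatrix,
    SimpleGraph.dotProduct_mulVec_adjMatrix, ← sum_add_distrib,
    SimpleGraph.degree_eq_sum_if_adj, sum_mul, ite_mul, one_mul, zero_mul,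
    ← sum_add_distrib, ite_add_ite, add_zero]
  rw [← add_self_div_two (∑ x_1 : V, ∑ x_2 : V, _)]
  conv_lhs => enter [1,2,2,i,2,j]; rw [if_congr (SimpleGraph.adj_comm G i j) rfl rfl]
  conv_lhs => enter [1,2]; rw [Finset.sum_comm]
  simp_rw [← sum_add_distrib, ite_add_ite]
  congr 2 with i
  congr 2 with j
  ring_nf

/-- Auxiliary: the signless Laplacian is positive semidefinite. -/
theorem aux_signless_posSemidef (G : SimpleGraph V) [DecidableRel G.Adj] :
    (G.degMatrix ℝ + G.adjMatrix ℝ).PosSemidef := by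
  rw [posSemidef_iff_dotProduct_mulVec]
  constructor
  · rw [IsHermitian, conjTranspose_eq_transpose_of_trivial, transpose_add,
      (G.isSymm_degMatrix ℝ).eq, (SimpleGraph.isSymm_adjMatrix G).eq]
  · intro x
    rw [star_trivial, aux_signless_quad]
    positivity

/-- Auxiliary: sum of eigenvalues of a real symmetric matrix is the trace. -/
theorem aux_sum_eig_eq_trace {A : Matrix V V ℝ} (hA : A.IsHermitian) :
    ∑ i, hA.eigenvalues i = A.trace := by
  nth_rewrite 2 [hA.spectral_theorem]
  rw [Unitary.conjStarAlgAut_apply, Matrix.trace_mul_cycle]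
  simp [Matrix.trace_diagonal, Unitary.coe_star_mul_self]

/-- Auxiliary: eigenvalue upper bound from positive semidefiniteness of `c • 1 - A`. -/
theorem aux_eig_le_of_posSemidef {A : Matrix V V ℝ} (hA : A.IsHermitian) {c : ℝ}
    (h : ((c • (1 : Matrix V V ℝ)) - A).PosSemidef) (i : V) : hA.eigenvalues i ≤ c := by
  set v : V → ℝ := ⇑(hA.eigenvectorBasis i) with hv
  have hmv := hA.mulVec_eigenvectorBasis i
  have h2 := h.dotProduct_mulVec_nonneg v
  rw [star_trivial, sub_mulVec, smul_mulVec, one_mulVec] at h2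
  rw [show A *ᵥ v = hA.eigenvalues i • v from hmv, dotProduct_sub,
    dotProduct_smul, dotProduct_smul, smul_eq_mul, smul_eq_mul] at h2
  have hvne : v ≠ 0 := by
    have := hA.eigenvectorBasis.orthonormal.ne_zero i
    intro hcon
    apply this
    ext j
    exact congrFun hcon j
  have hvv : 0 < v ⬝ᵥ v := by
    obtain ⟨j, hj⟩ := Function.ne_iff.mp hvne
    have : (0:ℝ) < v j * v j := mul_self_pos.mpr hj
    exact Finset.sum_pos' (fun k _ => mul_self_nonneg _) ⟨j, Finset.mem_univ j, this⟩
  nlinarith [h2, hvv]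

/-- Auxiliary: a nonnegative multiple of a PSD matrix is PSD. -/
theorem aux_posSemidef_smul {A : Matrix V V ℝ} (hA : A.PosSemidef) {c : ℝ} (hc : 0 ≤ c) :
    (c • A).PosSemidef := by
  rw [posSemidef_iff_dotProduct_mulVec]
  constructor
  · rw [IsHermitian, conjTranspose_smul, hA.1.eq, star_trivial]
  · intro x
    rw [smul_mulVec, dotProduct_smul, smul_eq_mul]
    exact mul_nonneg hc (hA.dotProduct_mulVec_nonneg x)

variable (G : SimpleGraph V) [DecidableRel G.Adj]

local notation "DD" => Matrix.diagonal (fun v => (Real.sqrt ((G.degree v : ℝ)))⁻¹)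

theorem aux_hDH : (DD)ᴴ = DD := by
  simp [Matrix.diagonal_conjTranspose]

theorem aux_nl_herm : (normalizedLapMatrix G).IsHermitian := by
  rw [normalizedLapMatrix, Matrix.IsHermitian, conjTranspose_mul, conjTranspose_mul, aux_hDH,
    (SimpleGraph.posSemidef_lapMatrix ℝ G).1.eq, Matrix.mul_assoc]

theorem aux_nl_psd : (normalizedLapMatrix G).PosSemidef := by
  rw [normalizedLapMatrix]
  have := (SimpleGraph.posSemidef_lapMatrix ℝ G).conjTranspose_mul_mul_same (DD)
  rwa [aux_hDH] at this

theorem aux_hDdegD (hdeg : ∀ v, 0 < G.degree v) : DD * G.degMatrix ℝ * DD = 1 := by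
  have h1 : (fun v : V => (Real.sqrt (G.degree v))⁻¹ * (G.degree v : ℝ) *
      (Real.sqrt (G.degree v))⁻¹) = fun _ => (1:ℝ) := by
    funext v
    have hd : (0:ℝ) < (G.degree v : ℝ) := by exact_mod_cast hdeg v
    have hs : Real.sqrt (G.degree v) * Real.sqrt (G.degree v) = G.degree v :=
      Real.mul_self_sqrt hd.le
    have hne : Real.sqrt (G.degree v) ≠ 0 := by positivity
    rw [← hs]
    field_simp
    rw [Real.sqrt_sq (Real.sqrt_nonneg _)]
  rw [SimpleGraph.degMatrix, diagonal_mul_diagonal, diagonal_mul_diagonal, h1,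
    Matrix.diagonal_one]

theorem aux_two_sub_nl (hdeg : ∀ v, 0 < G.degree v) :
    (2:ℝ) • (1 : Matrix V V ℝ) - normalizedLapMatrix G =
      DD * (G.degMatrix ℝ + G.adjMatrix ℝ) * DD := by
  rw [normalizedLapMatrix, SimpleGraph.lapMatrix, mul_sub, sub_mul, mul_add, add_mul,
    aux_hDdegD G hdeg, two_smul]
  abel

theorem aux_trace_nl (hdeg : ∀ v, 0 < G.degree v) :
    (normalizedLapMatrix G).trace = (Fintype.card V : ℝ) := by
  have h : ∀ v : V, normalizedLapMatrix G v v = 1 := by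
    intro v
    have hd : (0:ℝ) < (G.degree v : ℝ) := by exact_mod_cast hdeg v
    have hs : Real.sqrt (G.degree v) * Real.sqrt (G.degree v) = G.degree v :=
      Real.mul_self_sqrt hd.le
    have hne : Real.sqrt (G.degree v) ≠ 0 := by positivity
    simp [normalizedLapMatrix, Matrix.mul_diagonal, Matrix.diagonal_mul,
      SimpleGraph.lapMatrix, SimpleGraph.degMatrix, Matrix.sub_apply]
    rw [← hs]
    field_simp
    rw [Real.sqrt_sq (Real.sqrt_nonneg _)]
  simp [Matrix.trace, Matrix.diag, h, Finset.card_univ]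

end Aux

/-- Auxiliary: upper bound for the Shannon entropy of a probability vector. -/
theorem aux_entropy_le {ι : Type*} [Fintype ι] (μ : ι → ℝ) (h0 : ∀ i, 0 ≤ μ i)
    (hs : ∑ i, μ i = 1) :
    -∑ i, μ i * Real.log (μ i) ≤ Real.log (Fintype.card ι) := by
  have hne : (0:ℕ) < Fintype.card ι := by
    rcases Nat.eq_zero_or_pos (Fintype.card ι) with h | h
    · exfalso; rw [Fintype.card_eq_zero_iff] at h
      rw [Finset.sum_of_isEmpty] at hs; norm_num at hs
    · exact h
  set N : ℝ := (Fintype.card ι : ℝ) with hN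
  have hNpos : (0:ℝ) < N := by rw [hN]; exact_mod_cast hne
  have key : ∀ i, -(μ i * Real.log (μ i)) ≤ 1/N - μ i + μ i * Real.log N := by
    intro i
    rcases eq_or_lt_of_le (h0 i) with h | h
    · rw [← h]; simp; positivity
    · have hNm : 0 < N * μ i := by positivity
      have hlog : 1 - (N * μ i)⁻¹ ≤ Real.log (N * μ i) := by
        have := Real.log_le_sub_one_of_pos (inv_pos.2 hNm)
        rw [Real.log_inv] at this; linarith
      rw [Real.log_mul (ne_of_gt hNpos) (ne_of_gt h)] at hlog
      have hinv : μ i * (N * μ i)⁻¹ = 1/N := by field_simp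
      nlinarith [hlog, h]
  calc -∑ i, μ i * Real.log (μ i) = ∑ i, -(μ i * Real.log (μ i)) := by
        rw [← Finset.sum_neg_distrib]
    _ ≤ ∑ i, (1/N - μ i + μ i * Real.log N) := Finset.sum_le_sum fun i _ => key i
    _ = Real.log N := by
        rw [Finset.sum_add_distrib, Finset.sum_sub_distrib, ← Finset.sum_mul, hs,
          Finset.sum_const, Finset.card_univ]
        rw [nsmul_eq_mul, ← hN, mul_one_div_cancel (ne_of_gt hNpos)]; ring

/-- Auxiliary: lower bound for the Shannon entropy of a probability vector with
entries bounded by `c`. -/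
theorem aux_entropy_ge {ι : Type*} [Fintype ι] (μ : ι → ℝ) (h0 : ∀ i, 0 ≤ μ i)
    (hs : ∑ i, μ i = 1) {c : ℝ} (hub : ∀ i, μ i ≤ c) :
    -Real.log c ≤ -∑ i, μ i * Real.log (μ i) := by
  have key : ∀ i, μ i * (-Real.log c) ≤ -(μ i * Real.log (μ i)) := by
    intro i
    rcases eq_or_lt_of_le (h0 i) with h | h
    · rw [← h]; simp
    · have : Real.log (μ i) ≤ Real.log c := Real.log_le_log (by linarith) (hub i)
      nlinarith
  calc -Real.log c = ∑ i, μ i * (-Real.log c) := by rw [← Finset.sum_mul, hs, one_mul]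
    _ ≤ ∑ i, -(μ i * Real.log (μ i)) := Finset.sum_le_sum fun i _ => key i
    _ = -∑ i, μ i * Real.log (μ i) := Finset.sum_neg_distrib _

/-- Auxiliary: two-sided entropy bounds for the normalized-Laplacian density matrix. -/
theorem aux_ent_bounds [Fintype V] [DecidableEq V] (G : SimpleGraph V) [DecidableRel G.Adj]
    (hdeg : ∀ v, 0 < G.degree v) (hcard : 1 ≤ Fintype.card V) :
    Real.logb 2 (Fintype.card V) - 1 ≤
      matEntropy ((Fintype.card V : ℝ)⁻¹ • normalizedLapMatrix G) ∧
    matEntropy ((Fintype.card V : ℝ)⁻¹ • normalizedLapMatrix G) ≤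
      Real.logb 2 (Fintype.card V) := by
  set N : ℝ := (Fintype.card V : ℝ) with hNdef
  have hNpos : (0:ℝ) < N := by rw [hNdef]; exact_mod_cast hcard
  set ρ : Matrix V V ℝ := N⁻¹ • normalizedLapMatrix G with hρ
  have hPSD : ρ.PosSemidef := aux_posSemidef_smul (aux_nl_psd G) (by positivity)
  have hH : ρ.IsHermitian := hPSD.1
  set μ : V → ℝ := hH.eigenvalues with hμ
  have h0 : ∀ i, 0 ≤ μ i := hPSD.eigenvalues_nonneg
  have hsum : ∑ i, μ i = 1 := by
    rw [hμ, aux_sum_eig_eq_trace hH, hρ, Matrix.trace_smul, aux_trace_nl G hdeg, smul_eq_mul,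
      ← hNdef, inv_mul_cancel₀ (ne_of_gt hNpos)]
  have hub : ∀ i, μ i ≤ 2 / N := by
    intro i
    apply aux_eig_le_of_posSemidef hH _ i
    have heq : (2 / N) • (1 : Matrix V V ℝ) - ρ
        = N⁻¹ • ((2:ℝ) • (1 : Matrix V V ℝ) - normalizedLapMatrix G) := by
      rw [smul_sub, smul_smul, hρ]
      norm_num [div_eq_mul_inv, mul_comm]
    rw [heq]
    apply aux_posSemidef_smul _ (by positivity)
    rw [aux_two_sub_nl G hdeg]
    have := (aux_signless_posSemidef G).conjTranspose_mul_mul_same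
      (Matrix.diagonal (fun v => (Real.sqrt ((G.degree v : ℝ)))⁻¹))
    rwa [aux_hDH] at this
  have hlog2 : (0:ℝ) < Real.log 2 := Real.log_pos (by norm_num)
  have hterm : ∀ i : V, μ i * Real.logb 2 (μ i) = (μ i * Real.log (μ i)) / Real.log 2 := by
    intro i; rw [Real.logb, mul_div_assoc]
  have hmat : matEntropy ρ = (-∑ i, μ i * Real.log (μ i)) / Real.log 2 := by
    rw [matEntropy, dif_pos hH, neg_div, Finset.sum_div]
    congr 1
    exact Finset.sum_congr rfl fun i _ => hterm i
  constructor
  · rw [hmat]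
    have hlow := aux_entropy_ge μ h0 hsum hub
    have h2N : -Real.log (2 / N) = Real.log N - Real.log 2 := by
      rw [Real.log_div (by norm_num) (ne_of_gt hNpos)]; ring
    rw [h2N] at hlow
    have hkey : Real.logb 2 N - 1 = (Real.log N - Real.log 2) / Real.log 2 := by
      rw [Real.logb]; field_simp
    rw [hkey]
    exact (div_le_div_iff_of_pos_right hlog2).mpr hlow
  · rw [hmat, Real.logb]
    exact (div_le_div_iff_of_pos_right hlog2).mpr (aux_entropy_le μ h0 hsum)

set_option maxHeartbeats 1000000 in
/-- For any sequence of graphs `Gₙ` on `n` vertices without isolated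
vertices, the entropy of the density matrix `ρ̂_{Gₙ} = 𝓛(Gₙ)/n` built from the
normalized Laplacian satisfies `S(ρ̂_{Gₙ})/log₂ n → 1`, i.e. it is asymptotically
equal to `S(ρ_{Kₙ}) = log₂(n-1)`. -/
theorem normalized_entropy_ratio_tendsto_one
    (G : (n : ℕ) → SimpleGraph (Fin n)) (hdec : ∀ n, DecidableRel (G n).Adj)
    (hiso : ∀ n, 2 ≤ n → ∀ v : Fin n, ∃ u, (G n).Adj v u) :
    Filter.Tendsto
      (fun n : ℕ =>
        matEntropy ((n : ℝ)⁻¹ • @normalizedLapMatrix (Fin n) _ _ (G n) (hdec n))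
          / Real.logb 2 (n : ℝ))
      Filter.atTop (nhds 1) := by
  have hbounds : ∀ n : ℕ, 2 ≤ n →
      Real.logb 2 (n : ℝ) - 1 ≤
        matEntropy ((n : ℝ)⁻¹ • @normalizedLapMatrix (Fin n) _ _ (G n) (hdec n)) ∧
      matEntropy ((n : ℝ)⁻¹ • @normalizedLapMatrix (Fin n) _ _ (G n) (hdec n))
        ≤ Real.logb 2 (n : ℝ) := by
    intro n hn
    letI := hdec n
    have hdeg : ∀ v : Fin n, 0 < (G n).degree v := by
      intro v
      rw [SimpleGraph.degree_pos_iff_exists_adj]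
      exact hiso n hn v
    have H := aux_ent_bounds (G n) hdeg (by simp [Fintype.card_fin]; omega)
    rw [Fintype.card_fin] at H
    exact H
  have hloggt : ∀ n : ℕ, 2 ≤ n → (1:ℝ) ≤ Real.logb 2 (n : ℝ) := by
    intro n hn
    rw [show (1:ℝ) = Real.logb 2 2 by simp]
    exact Real.logb_le_logb_of_le (by norm_num) (by norm_num) (by exact_mod_cast hn)
  have hlogtop : Filter.Tendsto (fun n : ℕ => Real.logb 2 (n : ℝ)) Filter.atTop Filter.atTop :=
    (Real.tendsto_logb_atTop (by norm_num : (1:ℝ) < 2)).comp tendsto_natCast_atTop_atTop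
  apply tendsto_of_tendsto_of_tendsto_of_le_of_le'
    (g := fun n : ℕ => 1 - (Real.logb 2 (n:ℝ))⁻¹) (h := fun _ : ℕ => (1:ℝ))
  · have h0 : Filter.Tendsto (fun n : ℕ => (Real.logb 2 (n:ℝ))⁻¹) Filter.atTop (nhds 0) :=
      hlogtop.inv_tendsto_atTop
    have h1 : Filter.Tendsto (fun n : ℕ => 1 - (Real.logb 2 (n:ℝ))⁻¹) Filter.atTop
        (nhds (1 - 0)) := tendsto_const_nhds.sub h0
    simpa using h1
  · exact tendsto_const_nhds
  · filter_upwards [Filter.eventually_ge_atTop 2] with n hn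
    have hb := (hbounds n hn).1
    have hl := hloggt n hn
    have hlpos : (0:ℝ) < Real.logb 2 (n:ℝ) := by linarith
    have hkey : (1 - (Real.logb 2 (n:ℝ))⁻¹) = (Real.logb 2 (n:ℝ) - 1) / Real.logb 2 (n:ℝ) := by
      field_simp
    rw [hkey]
    exact (div_le_div_iff_of_pos_right hlpos).mpr hb
  · filter_upwards [Filter.eventually_ge_atTop 2] with n hn
    have hb := (hbounds n hn).2
    have hlpos : (0:ℝ) < Real.logb 2 (n:ℝ) := by linarith [hloggt n hn]
    rw [div_le_one hlpos]
    exact hb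
end
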